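/- arXiv:1607.03018 — 9 statements merged into one kernel-verified Lean document; each statement's English description precedes it below -/
import Mathlib

section
/- For every integer n ≥ 2, the occurrence graph G_{12}(id_n) of the pattern 12 in the identity permutation id_n has exactly n(n-1)(n-2)/2 edges, i.e. 3·C(n,3) edges. -/
open Finset

/-- `s` is an occurrence (index set) of the pattern `p` in the permutation `π`:
`s` has `k` elements and, listed increasingly, `π` on `s` is order isomorphic to `p`. -/
def IsOccurrence {k n : ℕ} (p : Equiv.Perm (Fin k)) (π : Equiv.Perm (Fin n))
    (s : Finset (Fin n)) : Prop :=
  ∃ h : s.card = k, ∀ a b : Fin k,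
    π ↑(s.orderIsoOfFin h a) < π ↑(s.orderIsoOfFin h b) ↔ p a < p b

/-- The occurrence set `V_p(π)` of all occurrence index sets of `p` in `π`. -/
def OccSet {k n : ℕ} (p : Equiv.Perm (Fin k)) (π : Equiv.Perm (Fin n)) :
    Set (Finset (Fin n)) :=
  {s | IsOccurrence p π s}

/-- The occurrence graph `G_p(π)`: vertices are the occurrences of `p` in `π`,
two occurrences adjacent iff they differ in exactly one element. -/
def OccGraph {k n : ℕ} (p : Equiv.Perm (Fin k)) (π : Equiv.Perm (Fin n)) :
    SimpleGraph {s : Finset (Fin n) // IsOccurrence p π s} where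
  Adj u v := (u.val \ v.val).card = 1 ∧ (v.val \ u.val).card = 1
  symm := ⟨fun u v h => ⟨h.2, h.1⟩⟩
  loopless := ⟨fun u h => by simp at h⟩

variable {n : ℕ}

lemma occ_iff (s : Finset (Fin n)) :
    IsOccurrence (Equiv.refl (Fin 2)) (Equiv.refl (Fin n)) s ↔ s.card = 2 := by
  constructor
  · rintro ⟨h, -⟩; exact h
  · intro h
    exact ⟨h, fun a b => by simp⟩

instance : DecidablePred (IsOccurrence (Equiv.refl (Fin 2)) (Equiv.refl (Fin n))) :=
  fun s => decidable_of_iff _ (occ_iff s).symm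

instance : DecidableRel (OccGraph (Equiv.refl (Fin 2)) (Equiv.refl (Fin n))).Adj :=
  fun u v => inferInstanceAs (Decidable (_ ∧ _))

lemma exists_xbc {u v : Finset (Fin n)} (hu : u.card = 2) (hv : v.card = 2)
    (h1 : (u \ v).card = 1) (h2 : (v \ u).card = 1) :
    ∃ x b c : Fin n, u ∩ v = {x} ∧ u \ v = {b} ∧ v \ u = {c} ∧
      u = {x, b} ∧ v = {x, c} ∧ x ≠ b ∧ x ≠ c ∧ b ≠ c := by
  have hi : (u ∩ v).card = 1 := by
    have := Finset.card_sdiff_add_card_inter u v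
    omega
  obtain ⟨x, hx⟩ := Finset.card_eq_one.mp hi
  obtain ⟨b, hb⟩ := Finset.card_eq_one.mp h1
  obtain ⟨c, hc⟩ := Finset.card_eq_one.mp h2
  have hxu : x ∈ u := (Finset.mem_inter.mp (hx ▸ Finset.mem_singleton_self x)).1
  have hxv : x ∈ v := (Finset.mem_inter.mp (hx ▸ Finset.mem_singleton_self x)).2
  have hbd := Finset.mem_sdiff.mp (hb ▸ Finset.mem_singleton_self b)
  have hcd := Finset.mem_sdiff.mp (hc ▸ Finset.mem_singleton_self c)
  refine ⟨x, b, c, hx, hb, hc, ?_, ?_, ?_, ?_, ?_⟩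
  · have := Finset.sdiff_union_inter u v
    rw [hb, hx] at this
    rw [← this]; ext a; simp; tauto
  · have := Finset.sdiff_union_inter v u
    rw [hc, Finset.inter_comm, hx] at this
    rw [← this]; ext a; simp; tauto
  · rintro rfl; exact hbd.2 hxv
  · rintro rfl; exact hcd.2 hxu
  · rintro rfl; exact hcd.2 hbd.1

def dartEquiv :
    (OccGraph (Equiv.refl (Fin 2)) (Equiv.refl (Fin n))).Dart ≃ (Fin 3 ↪ Fin n) where
  toFun d :=
    ⟨![(d.fst.val ∩ d.snd.val).min' (Finset.card_pos.mp (by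
        obtain ⟨x, b, c, hx, -⟩ := exists_xbc ((occ_iff _).mp d.fst.prop)
          ((occ_iff _).mp d.snd.prop) d.adj.1 d.adj.2
        rw [hx]; simp)),
      (d.fst.val \ d.snd.val).min' (Finset.card_pos.mp (by rw [d.adj.1]; simp)),
      (d.snd.val \ d.fst.val).min' (Finset.card_pos.mp (by rw [d.adj.2]; simp))], by
      obtain ⟨x, b, c, hx, hb, hc, -, -, hxb, hxc, hbc⟩ := exists_xbc
        ((occ_iff _).mp d.fst.prop) ((occ_iff _).mp d.snd.prop) d.adj.1 d.adj.2
      simp only [hx, hb, hc]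
      have h1 := hxb.symm; have h2 := hxc.symm; have h3 := hbc.symm
      intro i j
      fin_cases i <;> fin_cases j <;> simp_all⟩
  invFun f :=
    { toProd := (⟨{f 0, f 1}, (occ_iff _).mpr (by
        rw [Finset.card_insert_of_notMem (by simp [f.injective.ne (by decide : (0:Fin 3) ≠ 1)])]
        simp)⟩,
      ⟨{f 0, f 2}, (occ_iff _).mpr (by
        rw [Finset.card_insert_of_notMem (by simp [f.injective.ne (by decide : (0:Fin 3) ≠ 2)])]
        simp)⟩)
      adj := by
        have h01 : f 0 ≠ f 1 := f.injective.ne (by decide)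
        have h02 : f 0 ≠ f 2 := f.injective.ne (by decide)
        have h12 : f 1 ≠ f 2 := f.injective.ne (by decide)
        constructor
        · have : ({f 0, f 1} : Finset (Fin n)) \ {f 0, f 2} = {f 1} := by
            ext a; simp; aesop
          rw [this]; simp
        · have : ({f 0, f 2} : Finset (Fin n)) \ {f 0, f 1} = {f 2} := by
            ext a; simp; aesop
          rw [this]; simp }
  left_inv d := by
    obtain ⟨x, b, c, hx, hb, hc, hu, hv, hxb, hxc, hbc⟩ := exists_xbc
      ((occ_iff _).mp d.fst.prop) ((occ_iff _).mp d.snd.prop) d.adj.1 d.adj.2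
    ext1
    refine Prod.ext (Subtype.ext ?_) (Subtype.ext ?_)
    · simp only [hx, hb, hc, Finset.min'_singleton]
      exact hu.symm
    · simp only [hx, hb, hc, Finset.min'_singleton]
      exact hv.symm
  right_inv f := by
    have h01 : f 0 ≠ f 1 := f.injective.ne (by decide)
    have h02 : f 0 ≠ f 2 := f.injective.ne (by decide)
    have h12 : f 1 ≠ f 2 := f.injective.ne (by decide)
    have hi : ({f 0, f 1} : Finset (Fin n)) ∩ {f 0, f 2} = {f 0} := by
      ext a
      simp only [Finset.mem_inter, Finset.mem_insert, Finset.mem_singleton]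
      aesop
    have hs1 : ({f 0, f 1} : Finset (Fin n)) \ {f 0, f 2} = {f 1} := by
      ext a; simp; aesop
    have hs2 : ({f 0, f 2} : Finset (Fin n)) \ {f 0, f 1} = {f 2} := by
      ext a; simp; aesop
    ext i
    fin_cases i <;> simp [hi, hs1, hs2]

theorem card_edges_occGraph_id (n : ℕ) (hn : 2 ≤ n) :
    Nat.card (OccGraph (Equiv.refl (Fin 2)) (Equiv.refl (Fin n))).edgeSet =
      n * (n - 1) * (n - 2) / 2 ∧
    n * (n - 1) * (n - 2) / 2 = 3 * n.choose 3 := by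
  have hD : Fintype.card (OccGraph (Equiv.refl (Fin 2)) (Equiv.refl (Fin n))).Dart
      = Fintype.card (Fin 3 ↪ Fin n) := Fintype.card_congr dartEquiv
  rw [Fintype.card_embedding_eq, Fintype.card_fin, Fintype.card_fin] at hD
  have h2 : Fintype.card (OccGraph (Equiv.refl (Fin 2)) (Equiv.refl (Fin n))).Dart
      = 2 * #(OccGraph (Equiv.refl (Fin 2)) (Equiv.refl (Fin n))).edgeFinset :=
    SimpleGraph.dart_card_eq_twice_card_edges _
  have hNat : Nat.card (OccGraph (Equiv.refl (Fin 2)) (Equiv.refl (Fin n))).edgeSet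
      = #(OccGraph (Equiv.refl (Fin 2)) (Equiv.refl (Fin n))).edgeFinset := by
    rw [Nat.card_eq_fintype_card, SimpleGraph.edgeFinset_card]
  have hdesc : n.descFactorial 3 = n * (n - 1) * (n - 2) := by
    simp [Nat.descFactorial]; ring
  have hchoose : n.descFactorial 3 = 6 * n.choose 3 := by
    rw [Nat.descFactorial_eq_factorial_mul_choose]; norm_num [Nat.factorial]
  omega
end

section
/- For every integer n > 0 and every integer k > 3, the number of cliques of size k in the occurrence graph G_{12}(id_n) of the pattern 12 in the identity permutation id_n equals (k+1)·C(n,k+1) = n·C(n-1,k). -/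
open Finset

namespace CliqueAux

variable {n k : ℕ}

lemma occ_iff (s : Finset (Fin n)) :
    IsOccurrence (Equiv.refl (Fin 2)) (Equiv.refl (Fin n)) s ↔ s.card = 2 := by
  constructor
  · rintro ⟨h, -⟩; exact h
  · intro h
    refine ⟨h, fun a b => ?_⟩
    simp only [Equiv.refl_apply]
    exact Subtype.coe_lt_coe.trans (OrderIso.lt_iff_lt _)

abbrev V (n : ℕ) := {s : Finset (Fin n) // IsOccurrence (Equiv.refl (Fin 2)) (Equiv.refl (Fin n)) s}

lemma card_val (v : V n) : v.val.card = 2 := (occ_iff _).1 v.2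

def edge (x y : Fin n) (h : y ≠ x) : V n :=
  ⟨{x, y}, (occ_iff _).2 (card_pair (Ne.symm h))⟩

lemma pair_right_inj {x y y' : Fin n} (hy : y ≠ x) (h : ({x, y} : Finset (Fin n)) = {x, y'}) :
    y = y' := by
  have : y ∈ ({x, y'} : Finset (Fin n)) := h ▸ (by simp)
  simp at this; tauto

lemma sdiff_pair {x y y' : Fin n} (hy : y ≠ x) (hy' : y' ≠ x) (hyy' : y ≠ y') :
    (({x, y} : Finset (Fin n)) \ {x, y'}).card = 1 := by
  have : (({x, y} : Finset (Fin n)) \ {x, y'}) = {y} := by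
    ext a
    simp only [mem_sdiff, mem_insert, mem_singleton]
    simp only [not_or]
    constructor
    · rintro ⟨h1 | h1, h2, h3⟩
      · exact absurd h1 h2
      · exact h1
    · rintro rfl
      exact ⟨Or.inr rfl, hy, hyy'⟩
  rw [this, card_singleton]

lemma exists_pair_of_mem {w : Finset (Fin n)} {x : Fin n} (hw : w.card = 2) (hx : x ∈ w) :
    ∃ c, c ≠ x ∧ w = {x, c} := by
  obtain ⟨c, hc⟩ := card_eq_one.1 (by rw [card_erase_of_mem hx, hw])
  refine ⟨c, ?_, ?_⟩
  · have : c ∈ w.erase x := hc ▸ mem_singleton_self c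
    exact (mem_erase.1 this).1
  · rw [← insert_erase hx, hc]

lemma mem_of_inter {u w : Finset (Fin n)} {x a : Fin n}
    (hcard : (u ∩ w).card = 1) (hu : u = {x, a}) (hx : x ∉ w) : a ∈ w := by
  obtain ⟨c, hc⟩ := card_eq_one.1 hcard
  have hcm : c ∈ u ∩ w := hc ▸ mem_singleton_self c
  have hcu : c ∈ u := mem_inter.1 hcm |>.1
  have hcw : c ∈ w := mem_inter.1 hcm |>.2
  rw [hu] at hcu
  simp only [mem_insert, mem_singleton] at hcu
  rcases hcu with rfl | rfl
  · exact absurd hcw hx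
  · exact hcw

-- two adjacent vertices share exactly one element
lemma inter_card_one {u v : V n} (h : (OccGraph (Equiv.refl (Fin 2)) (Equiv.refl (Fin n))).Adj u v) :
    (u.val ∩ v.val).card = 1 := by
  have h1 : (u.val \ v.val).card = 1 := h.1
  have := Finset.card_sdiff_add_card_inter u.val v.val
  rw [h1, card_val u] at this
  omega

lemma clique_center (hk : 3 < k) (t : Finset (V n))
    (ht : (OccGraph (Equiv.refl (Fin 2)) (Equiv.refl (Fin n))).IsNClique k t) :
    ∃ x : Fin n, ∀ v ∈ t, x ∈ v.val := by
  have hcard : t.card = k := ht.2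
  obtain ⟨v1, hv1, v2, hv2, hne⟩ := Finset.one_lt_card.1 (by omega : 1 < t.card)
  have hadj : ∀ u ∈ t, ∀ v ∈ t, u ≠ v → (u.val ∩ v.val).card = 1 := by
    intro u hu v hv huv
    exact inter_card_one (ht.1 hu hv huv)
  obtain ⟨x, hx⟩ := card_eq_one.1 (hadj v1 hv1 v2 hv2 hne)
  have hxv1 : x ∈ v1.val := by
    have : x ∈ v1.val ∩ v2.val := hx ▸ mem_singleton_self x
    exact (mem_inter.1 this).1
  have hxv2 : x ∈ v2.val := by
    have : x ∈ v1.val ∩ v2.val := hx ▸ mem_singleton_self x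
    exact (mem_inter.1 this).2
  refine ⟨x, fun v3 hv3 => ?_⟩
  by_contra hxv3
  obtain ⟨a, hax, hv1e⟩ := exists_pair_of_mem (card_val v1) hxv1
  obtain ⟨b, hbx, hv2e⟩ := exists_pair_of_mem (card_val v2) hxv2
  have hne13 : v1 ≠ v3 := fun h => hxv3 (h ▸ hxv1)
  have hne23 : v2 ≠ v3 := fun h => hxv3 (h ▸ hxv2)
  have hab : a ≠ b := by
    rintro rfl
    exact hne (Subtype.ext (hv1e.trans hv2e.symm))
  have hav3 : a ∈ v3.val := mem_of_inter (hadj v1 hv1 v3 hv3 hne13) hv1e hxv3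
  have hbv3 : b ∈ v3.val := mem_of_inter (hadj v2 hv2 v3 hv3 hne23) hv2e hxv3
  have hv3e : v3.val = {a, b} := by
    obtain ⟨c, hcx, hv3e⟩ := exists_pair_of_mem (card_val v3) hav3
    rw [hv3e] at hbv3
    simp only [mem_insert, mem_singleton] at hbv3
    rcases hbv3 with rfl | rfl
    · exact absurd rfl hab
    · exact hv3e
  -- pick a fourth vertex
  have hsub : ¬ t ⊆ {v1, v2, v3} := by
    intro h
    have := Finset.card_le_card h
    have h32 : ({v2, v3} : Finset (V n)).card ≤ 2 := (card_insert_le _ _).trans (by simp)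
    have h3 : ({v1, v2, v3} : Finset (V n)).card ≤ 3 := (card_insert_le _ _).trans (by omega)
    omega
  obtain ⟨v4, hv4, hv4n⟩ := Finset.not_subset.1 hsub
  simp only [mem_insert, mem_singleton, not_or] at hv4n
  obtain ⟨h41, h42, h43⟩ := hv4n
  by_cases hxv4 : x ∈ v4.val
  · obtain ⟨c, hcx, hv4e⟩ := exists_pair_of_mem (card_val v4) hxv4
    have hxv3' : x ∉ v3.val := hxv3
    have hcv3 : c ∈ v3.val := mem_of_inter (hadj v4 hv4 v3 hv3 h43) hv4e hxv3'
    rw [hv3e] at hcv3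
    simp only [mem_insert, mem_singleton] at hcv3
    rcases hcv3 with rfl | rfl
    · exact h41 (Subtype.ext (hv4e.trans hv1e.symm))
    · exact h42 (Subtype.ext (hv4e.trans hv2e.symm))
  · have hav4 : a ∈ v4.val := mem_of_inter (hadj v1 hv1 v4 hv4 (Ne.symm h41)) hv1e hxv4
    have hbv4 : b ∈ v4.val := mem_of_inter (hadj v2 hv2 v4 hv4 (Ne.symm h42)) hv2e hxv4
    obtain ⟨c, hcx, hv4e⟩ := exists_pair_of_mem (card_val v4) hav4
    rw [hv4e] at hbv4
    simp only [mem_insert, mem_singleton] at hbv4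
    rcases hbv4 with rfl | rfl
    · exact hab rfl
    · exact h43 (Subtype.ext (hv4e.trans hv3e.symm))

end CliqueAux

namespace CliqueAux2
open CliqueAux

variable {n k : ℕ}

def emb (x : Fin n) (S : Finset (Fin n)) (hS : S ⊆ Finset.univ.erase x) : {y // y ∈ S} ↪ V n where
  toFun y := edge x y.1 ((mem_erase.1 (hS y.2)).1)
  inj' := by
    rintro ⟨y, hy⟩ ⟨y', hy'⟩ h
    have h2 : ({x, y} : Finset (Fin n)) = {x, y'} := congrArg Subtype.val h
    exact Subtype.ext (pair_right_inj ((mem_erase.1 (hS hy)).1) h2)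

def fset (x : Fin n) (S : Finset (Fin n)) (hS : S ⊆ Finset.univ.erase x) : Finset (V n) :=
  S.attach.map (emb x S hS)

lemma mem_fset {x : Fin n} {S : Finset (Fin n)} {hS : S ⊆ Finset.univ.erase x} {v : V n} :
    v ∈ fset x S hS ↔ ∃ y ∈ S, v.val = {x, y} := by
  simp only [fset, mem_map, mem_attach, true_and]
  constructor
  · rintro ⟨⟨y, hy⟩, rfl⟩
    exact ⟨y, hy, rfl⟩
  · rintro ⟨y, hy, hv⟩
    exact ⟨⟨y, hy⟩, Subtype.ext hv.symm⟩

lemma card_fset (x : Fin n) (S : Finset (Fin n)) (hS : S ⊆ Finset.univ.erase x) :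
    (fset x S hS).card = S.card := by
  simp [fset]

lemma fset_isNClique (x : Fin n) (S : Finset (Fin n)) (hS : S ⊆ Finset.univ.erase x)
    (hcard : S.card = k) :
    (OccGraph (Equiv.refl (Fin 2)) (Equiv.refl (Fin n))).IsNClique k (fset x S hS) := by
  constructor
  · intro u hu v hv huv
    rw [Finset.mem_coe, mem_fset] at hu hv
    obtain ⟨y, hy, hu⟩ := hu
    obtain ⟨y', hy', hv⟩ := hv
    have hyx : y ≠ x := (mem_erase.1 (hS hy)).1
    have hy'x : y' ≠ x := (mem_erase.1 (hS hy')).1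
    have hyy' : y ≠ y' := by
      rintro rfl
      exact huv (Subtype.ext (hu.trans hv.symm))
    refine ⟨?_, ?_⟩
    · rw [hu, hv]; exact sdiff_pair hyx hy'x hyy'
    · rw [hu, hv]; exact sdiff_pair hy'x hyx hyy'.symm
  · rw [card_fset, hcard]

abbrev P (n k : ℕ) := Σ x : Fin n, {S : Finset (Fin n) // S ∈ (Finset.univ.erase x).powersetCard k}

def f (p : P n k) :
    {t : Finset (V n) // (OccGraph (Equiv.refl (Fin 2)) (Equiv.refl (Fin n))).IsNClique k t} :=
  ⟨fset p.1 p.2.1 (mem_powersetCard.1 p.2.2).1,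
    fset_isNClique _ _ _ (mem_powersetCard.1 p.2.2).2⟩

lemma f_inj (hk : 3 < k) : Function.Injective (f (n := n) (k := k)) := by
  rintro ⟨x, S, hS⟩ ⟨x', S', hS'⟩ h
  have hval : fset x S (mem_powersetCard.1 hS).1 = fset x' S' (mem_powersetCard.1 hS').1 :=
    congrArg Subtype.val h
  obtain ⟨hSsub, hScard⟩ := mem_powersetCard.1 hS
  obtain ⟨hSsub', hScard'⟩ := mem_powersetCard.1 hS'
  have hxx : x = x' := by
    by_contra hxx
    have key : ∀ y ∈ S, y = x' := by
      intro y hy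
      have : (edge x y ((mem_erase.1 (hSsub hy)).1) : V n) ∈ fset x' S' hSsub' := by
        rw [← hval, mem_fset]
        exact ⟨y, hy, rfl⟩
      rw [mem_fset] at this
      obtain ⟨z, hz, hvz⟩ := this
      have hvz' : ({x, y} : Finset (Fin n)) = {x', z} := hvz
      have : x' ∈ ({x, y} : Finset (Fin n)) := by rw [hvz']; simp
      simp only [mem_insert, mem_singleton] at this
      rcases this with h' | h'
      · exact absurd h'.symm hxx
      · exact h'.symm
    obtain ⟨y1, hy1, y2, hy2, hne⟩ := Finset.one_lt_card.1 (by omega : 1 < S.card)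
    exact hne ((key y1 hy1).trans (key y2 hy2).symm)
  subst hxx
  have hSS : S = S' := by
    apply Finset.eq_of_subset_of_card_le _ (by omega)
    intro y hy
    have : (edge x y ((mem_erase.1 (hSsub hy)).1) : V n) ∈ fset x S' hSsub' := by
      rw [← hval, mem_fset]
      exact ⟨y, hy, rfl⟩
    rw [mem_fset] at this
    obtain ⟨z, hz, hvz⟩ := this
    have hyz : y = z := pair_right_inj ((mem_erase.1 (hSsub hy)).1) hvz
    exact hyz ▸ hz
  subst hSS
  rfl

lemma f_surj (hk : 3 < k) : Function.Surjective (f (n := n) (k := k)) := by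
  rintro ⟨t, ht⟩
  obtain ⟨x, hx⟩ := clique_center hk t ht
  classical
  set S : Finset (Fin n) := t.biUnion (fun v => v.val.erase x) with hSdef
  have hSsub : S ⊆ Finset.univ.erase x := by
    intro y hy
    rw [hSdef, mem_biUnion] at hy
    obtain ⟨v, hv, hy⟩ := hy
    exact mem_erase.2 ⟨(mem_erase.1 hy).1, mem_univ y⟩
  have hSle : S.card ≤ k := by
    refine (Finset.card_biUnion_le).trans ?_
    have : ∀ v ∈ t, (v.val.erase x).card = 1 := fun v hv => by
      rw [card_erase_of_mem (hx v hv), CliqueAux.card_val]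
    rw [Finset.sum_congr rfl this, Finset.sum_const, smul_eq_mul, mul_one, ht.2]
  have htsub : t ⊆ fset x S hSsub := by
    intro v hv
    obtain ⟨c, hcx, hve⟩ := exists_pair_of_mem (card_val v) (hx v hv)
    rw [mem_fset]
    refine ⟨c, ?_, hve⟩
    rw [hSdef, mem_biUnion]
    exact ⟨v, hv, mem_erase.2 ⟨hcx, by rw [hve]; simp⟩⟩
  have hkle : k ≤ S.card := by
    have := Finset.card_le_card htsub
    rw [card_fset, ht.2] at this
    exact this
  have hScard : S.card = k := le_antisymm hSle hkle
  have hteq : t = fset x S hSsub := by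
    apply Finset.eq_of_subset_of_card_le htsub
    rw [card_fset, ht.2, hScard]
  exact ⟨⟨x, S, mem_powersetCard.2 ⟨hSsub, hScard⟩⟩, Subtype.ext hteq.symm⟩

lemma sum_aux (n k : ℕ) :
    ∑ x : Fin n, Fintype.card {S : Finset (Fin n) // S ∈ (Finset.univ.erase x).powersetCard k}
      = n * (n - 1).choose k := by
  have : ∀ x : Fin n, Fintype.card {S : Finset (Fin n) // S ∈ (Finset.univ.erase x).powersetCard k}
      = (n - 1).choose k := by
    intro x
    rw [Fintype.card_coe, card_powersetCard, card_erase_of_mem (mem_univ x), card_univ,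
      Fintype.card_fin]
  simp only [this, Finset.sum_const, smul_eq_mul, card_univ, Fintype.card_fin]

lemma card_P (hn : 0 < n) : Nat.card (P n k) = n * (n - 1).choose k := by
  rw [Nat.card_eq_fintype_card]
  rw [Fintype.card_sigma]
  refine Eq.trans (Finset.sum_congr rfl fun x _ => ?_) (sum_aux n k)
  congr 1
  exact Subsingleton.elim _ _

end CliqueAux2

theorem card_cliques_occGraph_id (n k : ℕ) (hn : 0 < n) (hk : 3 < k) :
    Nat.card {t : Finset {s : Finset (Fin n) //
        IsOccurrence (Equiv.refl (Fin 2)) (Equiv.refl (Fin n)) s} //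
        (OccGraph (Equiv.refl (Fin 2)) (Equiv.refl (Fin n))).IsNClique k t} =
      (k + 1) * n.choose (k + 1) ∧
    (k + 1) * n.choose (k + 1) = n * (n - 1).choose k := by
  have hid : (k + 1) * n.choose (k + 1) = n * (n - 1).choose k := by
    have h2 : n - 1 + 1 = n := by omega
    have := Nat.add_one_mul_choose_eq (n - 1) k
    simp only [Nat.succ_eq_add_one, h2] at this
    rw [mul_comm]
    exact this.symm
  refine ⟨?_, hid⟩
  have hbij : Function.Bijective (CliqueAux2.f (n := n) (k := k)) :=
    ⟨CliqueAux2.f_inj hk, CliqueAux2.f_surj hk⟩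
  rw [← Nat.card_congr (Equiv.ofBijective _ hbij), CliqueAux2.card_P hn, hid]
end

section
/- For every integer n > 0 and every integer k > 3, the vertices of any clique of size k in the occurrence graph G_{12}(id_n) of the pattern 12 in the identity permutation id_n (these vertices being 2-element index sets) all share a common index, i.e. there exists ℓ ∈ {1,…,n} contained in every vertex of the clique. -/
open Finset

theorem clique_common_index (n k : ℕ) (hn : 0 < n) (hk : 3 < k)
    (t : Finset {s : Finset (Fin n) //
        IsOccurrence (Equiv.refl (Fin 2)) (Equiv.refl (Fin n)) s})
    (ht : (OccGraph (Equiv.refl (Fin 2)) (Equiv.refl (Fin n))).IsNClique k t) :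
    ∃ ℓ : Fin n, ∀ v ∈ t, ℓ ∈ v.val := by

  classical
  by_contra hcon
  push_neg at hcon
  have hcard2 : ∀ v : {s : Finset (Fin n) //
      IsOccurrence (Equiv.refl (Fin 2)) (Equiv.refl (Fin n)) s}, v.val.card = 2 :=
    fun v => v.2.choose
  have hint : ∀ u v, u ∈ t → v ∈ t → u ≠ v → ∃ ℓ, u.val ∩ v.val = {ℓ} := by
    intro u v hu hv huv
    obtain ⟨h1, h2⟩ := ht.1 (Finset.mem_coe.mpr hu) (Finset.mem_coe.mpr hv) huv
    have hc : (u.val ∩ v.val).card = 1 := by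
      have h3 := Finset.card_inter_add_card_sdiff u.val v.val
      have h4 := hcard2 u
      omega
    exact Finset.card_eq_one.mp hc
  have pair_of_mem : ∀ (s : Finset (Fin n)) (x : Fin n), s.card = 2 → x ∈ s →
      ∃ y, y ≠ x ∧ s = {x, y} := by
    intro s x hs hx
    obtain ⟨p, q, hpq, rfl⟩ := Finset.card_eq_two.mp hs
    rcases Finset.mem_insert.mp hx with rfl | hxq
    · exact ⟨q, hpq.symm, rfl⟩
    · rw [Finset.mem_singleton] at hxq; subst hxq
      exact ⟨p, hpq, by rw [Finset.pair_comm]⟩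
  have htne : t.Nonempty := by
    rw [← Finset.card_pos, ht.2]; omega
  obtain ⟨u, hu⟩ := htne
  obtain ⟨a, b, hab, huab⟩ := Finset.card_eq_two.mp (hcard2 u)
  have hau : a ∈ u.val := by rw [huab]; simp
  have hbu : b ∈ u.val := by rw [huab]; simp
  obtain ⟨v, hv, hav⟩ := hcon a
  obtain ⟨w, hw, hbw⟩ := hcon b
  have hvu : v ≠ u := by rintro rfl; exact hav hau
  have hwu : w ≠ u := by rintro rfl; exact hbw hbu
  -- b ∈ v
  obtain ⟨ℓ1, hl1⟩ := hint u v hu hv hvu.symm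
  have hbv : b ∈ v.val := by
    have hm := Finset.mem_inter.mp (hl1 ▸ Finset.mem_singleton_self ℓ1)
    have h5 : ℓ1 = a ∨ ℓ1 = b := by
      have := hm.1; rw [huab] at this; simpa using this
    rcases h5 with rfl | rfl
    · exact absurd hm.2 hav
    · exact hm.2
  -- a ∈ w
  obtain ⟨ℓ2, hl2⟩ := hint u w hu hw hwu.symm
  have haw : a ∈ w.val := by
    have hm := Finset.mem_inter.mp (hl2 ▸ Finset.mem_singleton_self ℓ2)
    have h5 : ℓ2 = a ∨ ℓ2 = b := by
      have := hm.1; rw [huab] at this; simpa using this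
    rcases h5 with rfl | rfl
    · exact hm.2
    · exact absurd hm.2 hbw
  obtain ⟨c, hcb, hvbc⟩ := pair_of_mem v.val b (hcard2 v) hbv
  obtain ⟨d, hda, hwad⟩ := pair_of_mem w.val a (hcard2 w) haw
  have hcv : c ∈ v.val := by rw [hvbc]; simp
  have hdw : d ∈ w.val := by rw [hwad]; simp
  have hca : c ≠ a := by rintro rfl; exact hav hcv
  have hdb : d ≠ b := by rintro rfl; exact hbw hdw
  have hvw : v ≠ w := by rintro rfl; exact hav haw
  -- intersection of v and w gives d = c
  obtain ⟨ℓ3, hl3⟩ := hint v w hv hw hvw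
  have hdc : d = c := by
    have hm := Finset.mem_inter.mp (hl3 ▸ Finset.mem_singleton_self ℓ3)
    have h5 : ℓ3 = b ∨ ℓ3 = c := by
      have := hm.1; rw [hvbc] at this; simpa using this
    have h6 : ℓ3 = a ∨ ℓ3 = d := by
      have := hm.2; rw [hwad] at this; simpa using this
    rcases h5 with rfl | rfl
    · rcases h6 with rfl | rfl
      · exact absurd hm.2 hbw
      · exact absurd hm.2 hbw
    · rcases h6 with h7 | h7
      · exact absurd (h7 ▸ hm.1) hav
      · exact h7.symm
  rw [hdc] at hwad
  -- get a fourth vertex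
  have hns : ¬ (t ⊆ {u, v, w}) := by
    intro hsub
    have h8 := Finset.card_le_card hsub
    have h9 := Finset.card_insert_le u ({v, w} : Finset _)
    have h10 := Finset.card_insert_le v ({w} : Finset _)
    have h11 : ({w} : Finset _).card = 1 := Finset.card_singleton w
    rw [ht.2] at h8
    omega
  obtain ⟨x, hx, hxnot⟩ := Finset.not_subset.mp hns
  have hxu : x ≠ u := by rintro rfl; exact hxnot (by simp)
  have hxv : x ≠ v := by rintro rfl; exact hxnot (by simp)
  have hxw : x ≠ w := by rintro rfl; exact hxnot (by simp)
  -- x meets u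
  have eq_of_two_mem : ∀ (y z : {s : Finset (Fin n) //
      IsOccurrence (Equiv.refl (Fin 2)) (Equiv.refl (Fin n)) s}) (p q : Fin n),
      y.val = {p, q} → p ∈ z.val → q ∈ z.val → z = y := by
    intro y z p q hy hp hq
    apply Subtype.ext
    refine (Finset.eq_of_subset_of_card_le ?_ ?_).symm
    · rw [hy]; exact Finset.insert_subset hp (Finset.singleton_subset_iff.mpr hq)
    · rw [hcard2 y, hcard2 z]
  obtain ⟨m1, hm1⟩ := hint x u hx hu hxu
  have hm1m := Finset.mem_inter.mp (hm1 ▸ Finset.mem_singleton_self m1)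
  have h12 : m1 = a ∨ m1 = b := by
    have := hm1m.2; rw [huab] at this; simpa using this
  rcases h12 with h | h
  · -- a ∈ x
    rw [h] at hm1m
    obtain ⟨m2, hm2⟩ := hint x v hx hv hxv
    have hm2m := Finset.mem_inter.mp (hm2 ▸ Finset.mem_singleton_self m2)
    have h13 : m2 = b ∨ m2 = c := by
      have := hm2m.2; rw [hvbc] at this; simpa using this
    rcases h13 with h' | h' <;> rw [h'] at hm2m
    · exact hxu (eq_of_two_mem u x a b huab hm1m.1 hm2m.1)
    · exact hxw (eq_of_two_mem w x a c hwad hm1m.1 hm2m.1)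
  · -- b ∈ x
    rw [h] at hm1m
    obtain ⟨m2, hm2⟩ := hint x w hx hw hxw
    have hm2m := Finset.mem_inter.mp (hm2 ▸ Finset.mem_singleton_self m2)
    have h13 : m2 = a ∨ m2 = c := by
      have := hm2m.2; rw [hwad] at this; simpa using this
    rcases h13 with h' | h' <;> rw [h'] at hm2m
    · -- a ∈ x and b ∈ x : x = u
      exact hxu (eq_of_two_mem u x a b huab hm2m.1 hm1m.1)
    · exact hxv (eq_of_two_mem v x b c hvbc hm1m.1 hm2m.1)
end

section
/- Let p be a pattern and let π, σ be permutations. For every occurrence of π in σ with index injection j, the induced map Φ_p : V_p(π) → V_p(σ), {i₁,…,i_l} ↦ {j(i₁),…,j(i_l)}, is an injective graph homomorphism from G_p(π) to G_p(σ); that is, Φ_p is injective and whenever u,v are adjacent in G_p(π), the vertices Φ_p(u), Φ_p(v) are adjacent in G_p(σ). Hence G_p(π) is isomorphic to a subgraph of G_p(σ). -/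
open Finset

theorem occGraph_embeds (l m n : ℕ)
    (p : Equiv.Perm (Fin l)) (π : Equiv.Perm (Fin m)) (σ : Equiv.Perm (Fin n))
    (j : Fin m → Fin n) (hj : StrictMono j)
    (hocc : ∀ a b : Fin m, σ (j a) < σ (j b) ↔ π a < π b) :
    ∃ Φ : {s : Finset (Fin m) // IsOccurrence p π s} →
          {s : Finset (Fin n) // IsOccurrence p σ s},
      (∀ u, (Φ u).val = u.val.image j) ∧
      Function.Injective Φ ∧
      ∀ u v, (OccGraph p π).Adj u v → (OccGraph p σ).Adj (Φ u) (Φ v) := by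
  have himg : ∀ s : Finset (Fin m), IsOccurrence p π s → IsOccurrence p σ (s.image j) := by
    rintro s ⟨hc, hiso⟩
    have hcard : (s.image j).card = l := by
      rw [Finset.card_image_of_injective _ hj.injective, hc]
    refine ⟨hcard, fun a b => ?_⟩
    have key : ∀ i : Fin l, ((s.image j).orderIsoOfFin hcard i : Fin n)
        = j (s.orderIsoOfFin hc i) := by
      have hmono : StrictMono (fun i : Fin l => j (s.orderIsoOfFin hc i)) :=
        hj.comp (fun a b hab => by
          simpa using (OrderIso.lt_iff_lt (s.orderIsoOfFin hc)).2 hab)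
      have hmem : ∀ i : Fin l, j (s.orderIsoOfFin hc i) ∈ s.image j := fun i =>
        Finset.mem_image_of_mem j (s.orderIsoOfFin hc i).2
      have := Finset.orderEmbOfFin_unique hcard hmem hmono
      intro i
      rw [Finset.coe_orderIsoOfFin_apply, ← congrFun this i]
    rw [key a, key b, hocc]
    exact hiso a b
  refine ⟨fun u => ⟨u.val.image j, himg u.val u.2⟩, fun u => rfl, ?_, ?_⟩
  · intro u v h
    have := congrArg Subtype.val h
    simp only at this
    exact Subtype.ext (Finset.image_injective hj.injective this)
  · rintro u v ⟨h1, h2⟩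
    constructor
    · rw [← Finset.image_sdiff _ _ hj.injective,
        Finset.card_image_of_injective _ hj.injective]
      exact h1
    · rw [← Finset.image_sdiff _ _ hj.injective,
        Finset.card_image_of_injective _ hj.injective]
      exact h2
end

section
/- Let c be a hereditary property of graphs (a property of simple graphs invariant under graph isomorphism and inherited by all subgraphs) and let p be a pattern. Then the set 𝒢_{p,c} = {π : G_p(π) has property c} is a permutation class: if σ ∈ 𝒢_{p,c} and π is contained in σ, then π ∈ 𝒢_{p,c}. Equivalently, there exists a set M of permutations such that 𝒢_{p,c} = Av(M). -/
open Finset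

/-- `σ` contains the pattern `π` (there is an occurrence of `π` in `σ`,
given by a strictly increasing index injection). -/
def PermContains {m n : ℕ} (σ : Equiv.Perm (Fin n)) (π : Equiv.Perm (Fin m)) : Prop :=
  ∃ j : Fin m → Fin n, StrictMono j ∧ ∀ a b : Fin m, σ (j a) < σ (j b) ↔ π a < π b

theorem hereditary_gives_permutation_class (k : ℕ) (p : Equiv.Perm (Fin k))
    (c : ∀ V : Type, SimpleGraph V → Prop)
    (hc : ∀ (V W : Type) (G : SimpleGraph V) (H : SimpleGraph W) (f : W → V),
      Function.Injective f → (∀ a b : W, H.Adj a b → G.Adj (f a) (f b)) →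
      c V G → c W H) :
    (∀ (m n : ℕ) (π : Equiv.Perm (Fin m)) (σ : Equiv.Perm (Fin n)),
      c {s : Finset (Fin n) // IsOccurrence p σ s} (OccGraph p σ) →
      PermContains σ π →
      c {s : Finset (Fin m) // IsOccurrence p π s} (OccGraph p π)) ∧
    ∃ M : Set (Σ n : ℕ, Equiv.Perm (Fin n)),
      {τ : Σ n : ℕ, Equiv.Perm (Fin n) |
          c {s : Finset (Fin τ.1) // IsOccurrence p τ.2 s} (OccGraph p τ.2)} =
      {τ : Σ n : ℕ, Equiv.Perm (Fin n) | ∀ q ∈ M, ¬ PermContains τ.2 q.2} := by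
  have main : ∀ (m n : ℕ) (π : Equiv.Perm (Fin m)) (σ : Equiv.Perm (Fin n)),
      c {s : Finset (Fin n) // IsOccurrence p σ s} (OccGraph p σ) →
      PermContains σ π →
      c {s : Finset (Fin m) // IsOccurrence p π s} (OccGraph p π) := by
    intro m n π σ hcσ hcon
    obtain ⟨j, hj, hjp⟩ := hcon
    have hmap : ∀ s : Finset (Fin m), IsOccurrence p π s →
        IsOccurrence p σ (s.image j) := by
      rintro s ⟨h, hs⟩
      have hcard : (s.image j).card = k := by
        rw [Finset.card_image_of_injective _ hj.injective, h]
      refine ⟨hcard, ?_⟩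
      have hfun : (fun a : Fin k => j (s.orderEmbOfFin h a)) =
          ⇑((s.image j).orderEmbOfFin hcard) := by
        refine Finset.orderEmbOfFin_unique hcard ?_ ?_
        · intro x; exact Finset.mem_image_of_mem j (s.orderEmbOfFin_mem h x)
        · exact hj.comp (s.orderEmbOfFin h).strictMono
      have key : ∀ a : Fin k, ((s.image j).orderIsoOfFin hcard a : Fin n) =
          j ((s.orderIsoOfFin h a : Fin m)) := by
        intro a
        rw [Finset.coe_orderIsoOfFin_apply, Finset.coe_orderIsoOfFin_apply,
          ← congrFun hfun a]
      intro a b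
      rw [key a, key b, hjp, hs]
    let F : {s : Finset (Fin m) // IsOccurrence p π s} →
        {s : Finset (Fin n) // IsOccurrence p σ s} :=
      fun u => ⟨u.1.image j, hmap u.1 u.2⟩
    have Finj : Function.Injective F := by
      intro u v huv
      exact Subtype.ext (Finset.image_injective hj.injective
        (congrArg Subtype.val huv))
    have Fadj : ∀ u v, (OccGraph p π).Adj u v → (OccGraph p σ).Adj (F u) (F v) := by
      rintro u v ⟨h1, h2⟩
      constructor
      · show ((u.1.image j) \ (v.1.image j)).card = 1
        rw [← Finset.image_sdiff _ _ hj.injective,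
          Finset.card_image_of_injective _ hj.injective, h1]
      · show ((v.1.image j) \ (u.1.image j)).card = 1
        rw [← Finset.image_sdiff _ _ hj.injective,
          Finset.card_image_of_injective _ hj.injective, h2]
    exact hc _ _ (OccGraph p σ) (OccGraph p π) F Finj Fadj hcσ
  refine ⟨main, ?_⟩
  refine ⟨{q | ¬ c {s : Finset (Fin q.1) // IsOccurrence p q.2 s} (OccGraph p q.2)}, ?_⟩
  ext τ
  simp only [Set.mem_setOf_eq]
  constructor
  · intro hτ q hq hcont
    exact hq (main _ _ q.2 τ.2 hτ hcont)
  · intro h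
    by_contra hτ
    exact h τ hτ ⟨id, strictMono_id, fun a b => Iff.rfl⟩
end

section
/- For every permutation π, the occurrence graph G_{12}(π) of the pattern 12 in π is bipartite if and only if π avoids the three patterns 123, 1432 and 3214; that is, 𝒢_{12,bipartite} = Av(123, 1432, 3214). -/
open Finset

/-- The permutation 1432 (0-indexed values). -/
def perm1432 : Equiv.Perm (Fin 4) := ⟨![0, 3, 2, 1], ![0, 3, 2, 1], by decide, by decide⟩

/-- The permutation 3214 (0-indexed values). -/
def perm3214 : Equiv.Perm (Fin 4) := ⟨![2, 1, 0, 3], ![2, 1, 0, 3], by decide, by decide⟩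

/-- The permutation 2143 (0-indexed values). -/
def perm2143 : Equiv.Perm (Fin 4) := ⟨![1, 0, 3, 2], ![1, 0, 3, 2], by decide, by decide⟩

/-! ### Auxiliary lemmas -/

section Aux

variable {n : ℕ}

lemma pair_card' {i j : Fin n} (hij : i < j) : ({i, j} : Finset (Fin n)).card = 2 :=
  Finset.card_pair hij.ne

lemma orderIso_pair {i j : Fin n} (hij : i < j)
    (h : ({i, j} : Finset (Fin n)).card = 2) :
    (↑(({i, j} : Finset (Fin n)).orderIsoOfFin h 0) = i) ∧
    (↑(({i, j} : Finset (Fin n)).orderIsoOfFin h 1) = j) := by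
  set e := ({i, j} : Finset (Fin n)).orderIsoOfFin h with he
  have h0 : (↑(e 0) : Fin n) ∈ ({i, j} : Finset (Fin n)) := (e 0).2
  have h1 : (↑(e 1) : Fin n) ∈ ({i, j} : Finset (Fin n)) := (e 1).2
  have hlt : (↑(e 0) : Fin n) < ↑(e 1) := e.strictMono (show (0 : Fin 2) < 1 by decide)
  simp only [Finset.mem_insert, Finset.mem_singleton] at h0 h1
  rcases h0 with h0 | h0 <;> rcases h1 with h1 | h1 <;>
    first
    | exact ⟨h0, h1⟩
    | (exfalso; rw [h0, h1] at hlt;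
       first | exact lt_irrefl _ hlt | exact absurd hlt (not_lt.mpr hij.le))

lemma occ2_iff (π : Equiv.Perm (Fin n)) (s : Finset (Fin n)) :
    IsOccurrence (Equiv.refl (Fin 2)) π s ↔
      ∃ i j : Fin n, i < j ∧ π i < π j ∧ s = {i, j} := by
  constructor
  · rintro ⟨h, hv⟩
    set e := s.orderIsoOfFin h with he
    refine ⟨↑(e 0), ↑(e 1), e.strictMono (show (0:Fin 2) < 1 by decide),
      (hv 0 1).mpr (by decide), ?_⟩
    apply (Finset.eq_of_subset_of_card_le ?_ ?_).symm
    · intro x hx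
      simp only [Finset.mem_insert, Finset.mem_singleton] at hx
      rcases hx with rfl | rfl
      · exact (e 0).2
      · exact (e 1).2
    · rw [h, pair_card' (e.strictMono (show (0:Fin 2) < 1 by decide))]
  · rintro ⟨i, j, hij, hπ, rfl⟩
    refine ⟨pair_card' hij, ?_⟩
    obtain ⟨e0, e1⟩ := orderIso_pair hij (pair_card' hij)
    intro a b
    fin_cases a <;> fin_cases b <;> simp_all <;> omega

lemma isOcc_pair (π : Equiv.Perm (Fin n)) {i j : Fin n} (hij : i < j) (hπ : π i < π j) :
    IsOccurrence (Equiv.refl (Fin 2)) π {i, j} :=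
  (occ2_iff π _).mpr ⟨i, j, hij, hπ, rfl⟩

lemma sdiff_pair {x y z : Fin n} (hyx : y ≠ x) (hyz : y ≠ z) :
    (({x, y} : Finset (Fin n)) \ {x, z}) = {y} := by
  ext w
  simp only [Finset.mem_sdiff, Finset.mem_insert, Finset.mem_singleton]
  constructor
  · rintro ⟨h1 | h1, h2⟩ <;> tauto
  · rintro rfl; tauto

lemma card_sdiff_pair {x y z : Fin n} (hyx : y ≠ x) (hyz : y ≠ z) :
    (({x, y} : Finset (Fin n)) \ {x, z}).card = 1 := by
  rw [sdiff_pair hyx hyz]; exact Finset.card_singleton y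

lemma contains123 (π : Equiv.Perm (Fin n)) {a b c : Fin n}
    (hab : a < b) (hbc : b < c) (h1 : π a < π b) (h2 : π b < π c) :
    PermContains π (Equiv.refl (Fin 3)) := by
  refine ⟨![a, b, c], ?_, ?_⟩
  · intro x y hxy
    fin_cases x <;> fin_cases y <;> simp_all <;>
      first | exact hab | exact hbc | exact hab.trans hbc
  · intro x y
    have h3 : π a < π c := h1.trans h2
    have n1 : ¬ π b < π a := not_lt.mpr h1.le
    have n2 : ¬ π c < π b := not_lt.mpr h2.le
    have n3 : ¬ π c < π a := not_lt.mpr h3.le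
    fin_cases x <;> fin_cases y <;> simp_all

lemma contains1432 (π : Equiv.Perm (Fin n)) {a b c d : Fin n}
    (hab : a < b) (hbc : b < c) (hcd : c < d)
    (h1 : π a < π d) (h2 : π d < π c) (h3 : π c < π b) :
    PermContains π perm1432 := by
  refine ⟨![a, b, c, d], ?_, ?_⟩
  · intro x y hxy
    fin_cases x <;> fin_cases y <;> simp_all <;>
      first | exact hab | exact hbc | exact hcd | exact hab.trans hbc
            | exact hbc.trans hcd | exact (hab.trans hbc).trans hcd
  · intro x y
    have hac : π a < π c := h1.trans h2
    have hab' : π a < π b := hac.trans h3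
    have hdb : π d < π b := h2.trans h3
    have n1 : ¬ π d < π a := not_lt.mpr h1.le
    have n2 : ¬ π c < π a := not_lt.mpr hac.le
    have n3 : ¬ π b < π a := not_lt.mpr hab'.le
    have n4 : ¬ π c < π d := not_lt.mpr h2.le
    have n5 : ¬ π b < π d := not_lt.mpr hdb.le
    have n6 : ¬ π b < π c := not_lt.mpr h3.le
    fin_cases x <;> fin_cases y <;> simp_all [perm1432]

lemma contains3214 (π : Equiv.Perm (Fin n)) {a b c d : Fin n}
    (hab : a < b) (hbc : b < c) (hcd : c < d)
    (h1 : π c < π b) (h2 : π b < π a) (h3 : π a < π d) :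
    PermContains π perm3214 := by
  refine ⟨![a, b, c, d], ?_, ?_⟩
  · intro x y hxy
    fin_cases x <;> fin_cases y <;> simp_all <;>
      first | exact hab | exact hbc | exact hcd | exact hab.trans hbc
            | exact hbc.trans hcd | exact (hab.trans hbc).trans hcd
  · intro x y
    have hca : π c < π a := h1.trans h2
    have hcd' : π c < π d := hca.trans h3
    have hbd : π b < π d := h2.trans h3
    have n1 : ¬ π b < π c := not_lt.mpr h1.le
    have n2 : ¬ π a < π c := not_lt.mpr hca.le
    have n3 : ¬ π d < π c := not_lt.mpr hcd'.le
    have n4 : ¬ π a < π b := not_lt.mpr h2.le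
    have n5 : ¬ π d < π b := not_lt.mpr hbd.le
    have n6 : ¬ π d < π a := not_lt.mpr h3.le
    fin_cases x <;> fin_cases y <;> simp_all [perm3214]

/-- The set of "partners" of `i` strictly between `i` and `j`. -/
def pset (π : Equiv.Perm (Fin n)) (i j : Fin n) : Finset (Fin n) :=
  univ.filter (fun k => i < k ∧ k < j ∧ π i < π k)

lemma keyL (π : Equiv.Perm (Fin n))
    (H123 : ∀ a b c : Fin n, a < b → b < c → π a < π b → π b < π c → False)
    (H1432 : ∀ a b c d : Fin n, a < b → b < c → c < d → π a < π d → π d < π c → π c < π b → False)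
    {i j1 j2 : Fin n} (h1 : i < j1) (h2 : j1 < j2)
    (o1 : π i < π j1) (o2 : π i < π j2) :
    pset π i j2 = insert j1 (pset π i j1) := by
  ext k
  simp only [pset, Finset.mem_filter, Finset.mem_univ, true_and, Finset.mem_insert]
  constructor
  · rintro ⟨hik, hkj2, hv⟩
    rcases lt_trichotomy k j1 with hk | rfl | hk
    · exact Or.inr ⟨hik, hk, hv⟩
    · exact Or.inl rfl
    · exfalso
      rcases lt_trichotomy (π k) (π j2) with hw | hw | hw
      · exact H123 i k j2 hik hkj2 hv hw
      · exact absurd (π.injective hw) hkj2.ne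
      · rcases lt_trichotomy (π k) (π j1) with hw' | hw' | hw'
        · exact H1432 i j1 k j2 h1 hk hkj2 o2 hw hw'
        · exact absurd (π.injective hw') hk.ne'
        · exact H123 i j1 k h1 hk o1 hw'
  · rintro (rfl | ⟨hik, hkj1, hv⟩)
    · exact ⟨h1, h2, o1⟩
    · exact ⟨hik, hkj1.trans h2, hv⟩

lemma keyR (π : Equiv.Perm (Fin n))
    (H123 : ∀ a b c : Fin n, a < b → b < c → π a < π b → π b < π c → False)
    (H3214 : ∀ a b c d : Fin n, a < b → b < c → c < d → π c < π b → π b < π a → π a < π d → False)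
    {i1 i2 j : Fin n} (h1 : i1 < i2) (h2 : i2 < j)
    (o1 : π i1 < π j) (o2 : π i2 < π j) :
    pset π i1 j = Finset.Ioo i1 i2 ∪ pset π i2 j := by
  have hval : π i2 < π i1 := by
    rcases lt_trichotomy (π i1) (π i2) with hw | hw | hw
    · exact absurd (H123 i1 i2 j h1 h2 hw o2) not_false
    · exact absurd (π.injective hw) h1.ne
    · exact hw
  ext k
  simp only [pset, Finset.mem_filter, Finset.mem_univ, true_and, Finset.mem_union,
    Finset.mem_Ioo]
  constructor
  · rintro ⟨hik, hkj, hv⟩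
    rcases lt_trichotomy k i2 with hk | rfl | hk
    · exact Or.inl ⟨hik, hk⟩
    · exact absurd hv (not_lt.mpr hval.le)
    · exact Or.inr ⟨hk, hkj, hval.trans hv⟩
  · rintro (⟨hik, hki2⟩ | ⟨hik, hkj, hv⟩)
    · refine ⟨hik, hki2.trans h2, ?_⟩
      rcases lt_trichotomy (π i1) (π k) with hw | hw | hw
      · exact hw
      · exact absurd (π.injective hw) hik.ne
      · exfalso
        rcases lt_trichotomy (π k) (π i2) with hw' | hw' | hw'
        · exact H123 k i2 j hki2 h2 hw' o2
        · exact absurd (π.injective hw') hki2.ne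
        · exact H3214 i1 k i2 j hik hki2 h2 hw' hw o1
    · refine ⟨h1.trans hik, hkj, ?_⟩
      rcases lt_trichotomy (π i1) (π k) with hw | hw | hw
      · exact hw
      · exact absurd (π.injective hw) (h1.trans hik).ne
      · exact absurd (H123 i2 k j hik hkj hv (hw.trans o1)) not_false

lemma cardL (π : Equiv.Perm (Fin n))
    (H123 : ∀ a b c : Fin n, a < b → b < c → π a < π b → π b < π c → False)
    (H1432 : ∀ a b c d : Fin n, a < b → b < c → c < d → π a < π d → π d < π c → π c < π b → False)
    {i j1 j2 : Fin n} (h1 : i < j1) (h2 : j1 < j2)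
    (o1 : π i < π j1) (o2 : π i < π j2) :
    (pset π i j2).card = (pset π i j1).card + 1 := by
  rw [keyL π H123 H1432 h1 h2 o1 o2, Finset.card_insert_of_notMem]
  simp [pset]

lemma cardR (π : Equiv.Perm (Fin n))
    (H123 : ∀ a b c : Fin n, a < b → b < c → π a < π b → π b < π c → False)
    (H3214 : ∀ a b c d : Fin n, a < b → b < c → c < d → π c < π b → π b < π a → π a < π d → False)
    {i1 i2 j : Fin n} (h1 : i1 < i2) (h2 : i2 < j)
    (o1 : π i1 < π j) (o2 : π i2 < π j) :
    (pset π i1 j).card = ((i2 : ℕ) - (i1 : ℕ) - 1) + (pset π i2 j).card := by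
  rw [keyR π H123 H3214 h1 h2 o1 o2, Finset.card_union_of_disjoint, Fin.card_Ioo]
  rw [Finset.disjoint_left]
  intro k hk hk'
  simp only [Finset.mem_Ioo] at hk
  simp only [pset, Finset.mem_filter] at hk'
  exact absurd (hk.2.trans hk'.2.1) (lt_irrefl k)

lemma min'_pair {i j : Fin n} (hij : i < j) (H : ({i, j} : Finset (Fin n)).Nonempty) :
    ({i, j} : Finset (Fin n)).min' H = i := by
  apply le_antisymm (Finset.min'_le _ i (by simp))
  apply Finset.le_min'
  intro y hy
  simp only [Finset.mem_insert, Finset.mem_singleton] at hy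
  rcases hy with rfl | rfl
  · exact le_refl _
  · exact hij.le

lemma max'_pair {i j : Fin n} (hij : i < j) (H : ({i, j} : Finset (Fin n)).Nonempty) :
    ({i, j} : Finset (Fin n)).max' H = j := by
  apply le_antisymm
  · apply Finset.max'_le
    intro y hy
    simp only [Finset.mem_insert, Finset.mem_singleton] at hy
    rcases hy with rfl | rfl
    · exact hij.le
    · exact le_refl _
  · exact Finset.le_max' _ j (by simp)

lemma min'_eq_of {i j : Fin n} (s : Finset (Fin n)) (H : s.Nonempty) (hij : i < j)
    (hs : s = {i, j}) : s.min' H = i := by subst hs; exact min'_pair hij H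

lemma max'_eq_of {i j : Fin n} (s : Finset (Fin n)) (H : s.Nonempty) (hij : i < j)
    (hs : s = {i, j}) : s.max' H = j := by subst hs; exact max'_pair hij H

lemma fin2_three (x y z : Fin 2) (h1 : x ≠ y) (h2 : x ≠ z) (h3 : y ≠ z) : False := by
  fin_cases x <;> fin_cases y <;> fin_cases z <;> simp_all

end Aux

theorem bipartite_iff_avoids (n : ℕ) (π : Equiv.Perm (Fin n)) :
    (OccGraph (Equiv.refl (Fin 2)) π).Colorable 2 ↔
      (¬ PermContains π (Equiv.refl (Fin 3)) ∧
       ¬ PermContains π perm1432 ∧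
       ¬ PermContains π perm3214) := by
  constructor
  · rintro ⟨C⟩
    refine ⟨?_, ?_, ?_⟩
    · -- no 123
      rintro ⟨f, hsm, hiff⟩
      set a := f 0; set b := f 1; set c := f 2
      have hab : a < b := hsm (show (0:Fin 3) < 1 by decide)
      have hbc : b < c := hsm (show (1:Fin 3) < 2 by decide)
      have vab : π a < π b := (hiff 0 1).mpr (by decide)
      have vbc : π b < π c := (hiff 1 2).mpr (by decide)
      have vac : π a < π c := vab.trans vbc
      set v1 : {s // IsOccurrence (Equiv.refl (Fin 2)) π s} := ⟨{a, b}, isOcc_pair π hab vab⟩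
      set v2 : {s // IsOccurrence (Equiv.refl (Fin 2)) π s} := ⟨{a, c}, isOcc_pair π (hab.trans hbc) vac⟩
      set v3 : {s // IsOccurrence (Equiv.refl (Fin 2)) π s} := ⟨{b, c}, isOcc_pair π hbc vbc⟩
      have adj12 : (OccGraph (Equiv.refl (Fin 2)) π).Adj v1 v2 :=
        ⟨card_sdiff_pair hab.ne' hbc.ne, card_sdiff_pair (hab.trans hbc).ne' hbc.ne'⟩
      have adj13 : (OccGraph (Equiv.refl (Fin 2)) π).Adj v1 v3 := by
        constructor
        · show (({a, b} : Finset (Fin n)) \ {b, c}).card = 1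
          rw [Finset.pair_comm a b]
          exact card_sdiff_pair hab.ne (hab.trans hbc).ne
        · show (({b, c} : Finset (Fin n)) \ {a, b}).card = 1
          rw [Finset.pair_comm a b]
          exact card_sdiff_pair hbc.ne' (hab.trans hbc).ne'
      have adj23 : (OccGraph (Equiv.refl (Fin 2)) π).Adj v2 v3 := by
        constructor
        · show (({a, c} : Finset (Fin n)) \ {b, c}).card = 1
          rw [Finset.pair_comm a c, Finset.pair_comm b c]
          exact card_sdiff_pair (hab.trans hbc).ne hab.ne
        · show (({b, c} : Finset (Fin n)) \ {a, c}).card = 1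
          rw [Finset.pair_comm a c, Finset.pair_comm b c]
          exact card_sdiff_pair hbc.ne hab.ne'
      exact fin2_three (C v1) (C v2) (C v3) (C.valid adj12) (C.valid adj13) (C.valid adj23)
    · -- no 1432
      rintro ⟨f, hsm, hiff⟩
      set a := f 0; set b := f 1; set c := f 2; set d := f 3
      have hab : a < b := hsm (show (0:Fin 4) < 1 by decide)
      have hbc : b < c := hsm (show (1:Fin 4) < 2 by decide)
      have hcd : c < d := hsm (show (2:Fin 4) < 3 by decide)
      have vad : π a < π d := (hiff 0 3).mpr (by decide)
      have vdc : π d < π c := (hiff 3 2).mpr (by decide)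
      have vcb : π c < π b := (hiff 2 1).mpr (by decide)
      have vab : π a < π b := (vad.trans vdc).trans vcb
      have vac : π a < π c := vad.trans vdc
      set v1 : {s // IsOccurrence (Equiv.refl (Fin 2)) π s} := ⟨{a, b}, isOcc_pair π hab vab⟩
      set v2 : {s // IsOccurrence (Equiv.refl (Fin 2)) π s} :=
        ⟨{a, c}, isOcc_pair π (hab.trans hbc) vac⟩
      set v3 : {s // IsOccurrence (Equiv.refl (Fin 2)) π s} :=
        ⟨{a, d}, isOcc_pair π ((hab.trans hbc).trans hcd) vad⟩
      have adj12 : (OccGraph (Equiv.refl (Fin 2)) π).Adj v1 v2 :=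
        ⟨card_sdiff_pair hab.ne' hbc.ne, card_sdiff_pair (hab.trans hbc).ne' hbc.ne'⟩
      have adj13 : (OccGraph (Equiv.refl (Fin 2)) π).Adj v1 v3 :=
        ⟨card_sdiff_pair hab.ne' (hbc.trans hcd).ne,
         card_sdiff_pair ((hab.trans hbc).trans hcd).ne' (hbc.trans hcd).ne'⟩
      have adj23 : (OccGraph (Equiv.refl (Fin 2)) π).Adj v2 v3 :=
        ⟨card_sdiff_pair (hab.trans hbc).ne' hcd.ne,
         card_sdiff_pair ((hab.trans hbc).trans hcd).ne' hcd.ne'⟩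
      exact fin2_three (C v1) (C v2) (C v3) (C.valid adj12) (C.valid adj13) (C.valid adj23)
    · -- no 3214
      rintro ⟨f, hsm, hiff⟩
      set a := f 0; set b := f 1; set c := f 2; set d := f 3
      have hab : a < b := hsm (show (0:Fin 4) < 1 by decide)
      have hbc : b < c := hsm (show (1:Fin 4) < 2 by decide)
      have hcd : c < d := hsm (show (2:Fin 4) < 3 by decide)
      have vcb : π c < π b := (hiff 2 1).mpr (by decide)
      have vba : π b < π a := (hiff 1 0).mpr (by decide)
      have vad : π a < π d := (hiff 0 3).mpr (by decide)
      have vbd : π b < π d := vba.trans vad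
      have vcd : π c < π d := vcb.trans vbd
      set v1 : {s // IsOccurrence (Equiv.refl (Fin 2)) π s} :=
        ⟨{a, d}, isOcc_pair π ((hab.trans hbc).trans hcd) vad⟩
      set v2 : {s // IsOccurrence (Equiv.refl (Fin 2)) π s} :=
        ⟨{b, d}, isOcc_pair π (hbc.trans hcd) vbd⟩
      set v3 : {s // IsOccurrence (Equiv.refl (Fin 2)) π s} := ⟨{c, d}, isOcc_pair π hcd vcd⟩
      have adj12 : (OccGraph (Equiv.refl (Fin 2)) π).Adj v1 v2 := by
        constructor
        · show (({a, d} : Finset (Fin n)) \ {b, d}).card = 1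
          rw [Finset.pair_comm a d, Finset.pair_comm b d]
          exact card_sdiff_pair ((hab.trans hbc).trans hcd).ne hab.ne
        · show (({b, d} : Finset (Fin n)) \ {a, d}).card = 1
          rw [Finset.pair_comm a d, Finset.pair_comm b d]
          exact card_sdiff_pair (hbc.trans hcd).ne hab.ne'
      have adj13 : (OccGraph (Equiv.refl (Fin 2)) π).Adj v1 v3 := by
        constructor
        · show (({a, d} : Finset (Fin n)) \ {c, d}).card = 1
          rw [Finset.pair_comm a d, Finset.pair_comm c d]
          exact card_sdiff_pair ((hab.trans hbc).trans hcd).ne (hab.trans hbc).ne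
        · show (({c, d} : Finset (Fin n)) \ {a, d}).card = 1
          rw [Finset.pair_comm a d, Finset.pair_comm c d]
          exact card_sdiff_pair hcd.ne (hab.trans hbc).ne'
      have adj23 : (OccGraph (Equiv.refl (Fin 2)) π).Adj v2 v3 := by
        constructor
        · show (({b, d} : Finset (Fin n)) \ {c, d}).card = 1
          rw [Finset.pair_comm b d, Finset.pair_comm c d]
          exact card_sdiff_pair (hbc.trans hcd).ne hbc.ne
        · show (({c, d} : Finset (Fin n)) \ {b, d}).card = 1
          rw [Finset.pair_comm b d, Finset.pair_comm c d]
          exact card_sdiff_pair hcd.ne hbc.ne'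
      exact fin2_three (C v1) (C v2) (C v3) (C.valid adj12) (C.valid adj13) (C.valid adj23)
  · rintro ⟨h123, h1432, h3214⟩
    have H123 : ∀ a b c : Fin n, a < b → b < c → π a < π b → π b < π c → False :=
      fun a b c hab hbc v1 v2 => h123 (contains123 π hab hbc v1 v2)
    have H1432 : ∀ a b c d : Fin n, a < b → b < c → c < d →
        π a < π d → π d < π c → π c < π b → False :=
      fun a b c d hab hbc hcd v1 v2 v3 => h1432 (contains1432 π hab hbc hcd v1 v2 v3)
    have H3214 : ∀ a b c d : Fin n, a < b → b < c → c < d →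
        π c < π b → π b < π a → π a < π d → False :=
      fun a b c d hab hbc hcd v1 v2 v3 => h3214 (contains3214 π hab hbc hcd v1 v2 v3)
    have hne : ∀ u : {s // IsOccurrence (Equiv.refl (Fin 2)) π s}, u.val.Nonempty := by
      intro u
      obtain ⟨i, j, hij, hπ, hu⟩ := (occ2_iff π u.val).mp u.2
      rw [hu]; exact Finset.insert_nonempty _ _
    -- the coloring: parity of (min + number of partners of min before max)
    set F : {s // IsOccurrence (Equiv.refl (Fin 2)) π s} → ℕ :=
      fun u => (↑(u.val.min' (hne u)) : ℕ) +
        (pset π (u.val.min' (hne u)) (u.val.max' (hne u))).card with hF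
    refine ⟨SimpleGraph.Coloring.mk (fun u => (⟨F u % 2, by omega⟩ : Fin 2)) ?_⟩
    intro u v hadj
    obtain ⟨hc1, hc2⟩ := hadj
    obtain ⟨i, j, hij, hπu, hu⟩ := (occ2_iff π u.val).mp u.2
    obtain ⟨i', j', hij', hπv, hv⟩ := (occ2_iff π v.val).mp v.2
    have hFu : F u = (i : ℕ) + (pset π i j).card := by
      simp only [hF, min'_eq_of u.val (hne u) hij hu, max'_eq_of u.val (hne u) hij hu]
    have hFv : F v = (i' : ℕ) + (pset π i' j').card := by
      simp only [hF, min'_eq_of v.val (hne v) hij' hv, max'_eq_of v.val (hne v) hij' hv]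
    -- the two occurrences share exactly one element
    have hcu : u.val.card = 2 := by rw [hu]; exact pair_card' hij
    have hne_uv : u.val ≠ v.val := by
      intro h
      rw [h, Finset.sdiff_self] at hc1
      simp at hc1
    have hint : (u.val ∩ v.val).card = 1 := by
      have h' := Finset.card_sdiff_add_card_inter u.val v.val
      omega
    obtain ⟨x, hx⟩ := Finset.card_eq_one.mp hint
    have hxu : x ∈ u.val := (Finset.mem_inter.mp (hx ▸ Finset.mem_singleton_self x)).1
    have hxv : x ∈ v.val := (Finset.mem_inter.mp (hx ▸ Finset.mem_singleton_self x)).2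
    have honly : ∀ y, y ∈ u.val → y ∈ v.val → y = x := by
      intro y h1 h2
      have : y ∈ u.val ∩ v.val := Finset.mem_inter.mpr ⟨h1, h2⟩
      rw [hx] at this
      exact Finset.mem_singleton.mp this
    have hxu' : x = i ∨ x = j := by
      rw [hu] at hxu
      simpa using hxu
    have hxv' : x = i' ∨ x = j' := by
      rw [hv] at hxv
      simpa using hxv
    have hmem_u : ∀ y : Fin n, y ∈ u.val ↔ (y = i ∨ y = j) := by
      intro y; rw [hu]; simp
    have hmem_v : ∀ y : Fin n, y ∈ v.val ↔ (y = i' ∨ y = j') := by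
      intro y; rw [hv]; simp
    -- goal: colors differ
    suffices hpar : F u % 2 ≠ F v % 2 by
      intro h
      rw [Fin.mk.injEq] at h
      exact hpar h
    rcases hxu' with rfl | rfl
    · rcases hxv' with hii' | hij'eq
      · -- shared element is the min of both: L-edge
        subst hii'
        have hjj' : j ≠ j' := by
          intro h
          apply hne_uv
          rw [hu, hv, h]
        rcases lt_or_gt_of_ne hjj' with hlt | hlt
        · have := cardL π H123 H1432 hij hlt hπu hπv
          rw [hFu, hFv]
          omega
        · have := cardL π H123 H1432 hij' hlt hπv hπu
          rw [hFu, hFv]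
          omega
      · -- x = i = j' : mixed, gives 123
        exfalso
        have : i' < x := hij'eq ▸ hij'
        have : π i' < π x := hij'eq ▸ hπv
        exact H123 i' x j (hij'eq ▸ hij') hij this hπu
    · rcases hxv' with hji' | hjj'
      · -- x = j = i' : mixed, gives 123
        exfalso
        exact H123 i x j' hij (hji' ▸ hij') hπu (hji' ▸ hπv)
      · -- shared element is the max of both: R-edge
        subst hjj'
        have hii' : i ≠ i' := by
          intro h
          apply hne_uv
          rw [hu, hv, h]
        rcases lt_or_gt_of_ne hii' with hlt | hlt
        · have := cardR π H123 H3214 hlt hij' hπu hπv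
          have hvlt : (i : ℕ) < (i' : ℕ) := hlt
          rw [hFu, hFv]
          omega
        · have := cardR π H123 H3214 hlt hij hπv hπu
          have hvlt : (i' : ℕ) < (i : ℕ) := hlt
          rw [hFu, hFv]
          omega
end

section
/- For every permutation π, the occurrence graph G_{12}(π) of the pattern 12 in π is a forest (contains no simple cycle) if and only if π avoids the four patterns 123, 1432, 2143 and 3214; that is, 𝒢_{12,forest} = Av(123, 1432, 2143, 3214). -/
open Finset

/-! ### Auxiliary lemmas -/

section Aux

open SimpleGraph

lemma pair_orderIso {n : ℕ} {a b : Fin n} (hab : a < b) (h : ({a,b} : Finset (Fin n)).card = 2) :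
    (↑(({a,b} : Finset (Fin n)).orderIsoOfFin h 0) = a) ∧
      (↑(({a,b} : Finset (Fin n)).orderIsoOfFin h 1) = b) := by
  set s : Finset (Fin n) := {a, b} with hs
  have h0 : (↑(s.orderIsoOfFin h 0) : Fin n) ∈ s := (s.orderIsoOfFin h 0).2
  have h1 : (↑(s.orderIsoOfFin h 1) : Fin n) ∈ s := (s.orderIsoOfFin h 1).2
  have hlt : (↑(s.orderIsoOfFin h 0) : Fin n) < ↑(s.orderIsoOfFin h 1) := by
    exact_mod_cast (s.orderIsoOfFin h).strictMono (by decide : (0 : Fin 2) < 1)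
  simp only [hs, mem_insert, mem_singleton] at h0 h1
  rcases h0 with h0 | h0 <;> rcases h1 with h1 | h1 <;>
    rw [h0, h1] at hlt ⊢ <;> simp_all <;> omega

lemma occ_two_iff {n : ℕ} (π : Equiv.Perm (Fin n)) (s : Finset (Fin n)) :
    IsOccurrence (Equiv.refl (Fin 2)) π s ↔
      ∃ a b : Fin n, a < b ∧ π a < π b ∧ s = {a, b} := by
  constructor
  · rintro ⟨h, hc⟩
    set f := s.orderIsoOfFin h with hf
    refine ⟨↑(f 0), ↑(f 1), ?_, ?_, ?_⟩
    · exact_mod_cast f.strictMono (by decide : (0 : Fin 2) < 1)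
    · exact (hc 0 1).mpr (by decide)
    · apply Finset.Subset.antisymm
      · intro x hx
        have : (⟨x, hx⟩ : {y // y ∈ s}) = f (f.symm ⟨x, hx⟩) := (f.apply_symm_apply _).symm
        have h2 : f.symm ⟨x, hx⟩ = 0 ∨ f.symm ⟨x, hx⟩ = 1 := by omega
        rcases h2 with h2 | h2 <;> rw [h2] at this
        · simp only [mem_insert, mem_singleton]
          exact Or.inl (congrArg Subtype.val this)
        · simp only [mem_insert, mem_singleton]
          exact Or.inr (congrArg Subtype.val this)
      · intro x hx
        simp only [mem_insert, mem_singleton] at hx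
        rcases hx with rfl | rfl
        · exact (f 0).2
        · exact (f 1).2
  · rintro ⟨a, b, hab, hπ, rfl⟩
    have h : ({a, b} : Finset (Fin n)).card = 2 := Finset.card_pair hab.ne
    refine ⟨h, ?_⟩
    obtain ⟨e0, e1⟩ := pair_orderIso hab h
    intro i j
    fin_cases i <;> fin_cases j <;>
      simp [e0, e1, hπ, hπ.asymm, lt_irrefl]

lemma occ_pair_lt {n : ℕ} {π : Equiv.Perm (Fin n)} {p q : Fin n}
    (hocc : IsOccurrence (Equiv.refl (Fin 2)) π {p, q}) (hpq : p < q) : π p < π q := by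
  obtain ⟨a, b, hab, hπ, heq⟩ := (occ_two_iff π _).mp hocc
  have hp : p ∈ ({a, b} : Finset (Fin n)) := heq ▸ mem_insert_self p {q}
  have hq : q ∈ ({a, b} : Finset (Fin n)) := heq ▸ (by simp : q ∈ ({p, q} : Finset (Fin n)))
  simp only [mem_insert, mem_singleton] at hp hq
  rcases hp with rfl | rfl <;> rcases hq with rfl | rfl
  · exact absurd rfl hpq.ne
  · exact hπ
  · exact absurd hab (lt_asymm hpq)
  · exact absurd rfl hpq.ne

lemma occ_mem_pair {n : ℕ} {π : Equiv.Perm (Fin n)} {s : Finset (Fin n)} {q : Fin n}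
    (hocc : IsOccurrence (Equiv.refl (Fin 2)) π s) (hq : q ∈ s) :
    ∃ r : Fin n, r ≠ q ∧ s = {q, r} := by
  obtain ⟨a, b, hab, hπ, rfl⟩ := (occ_two_iff π _).mp hocc
  simp only [mem_insert, mem_singleton] at hq
  rcases hq with rfl | rfl
  · exact ⟨b, hab.ne', rfl⟩
  · exact ⟨a, hab.ne, Finset.pair_comm a q⟩

lemma pair_sdiff {α : Type*} [DecidableEq α] {e x y : α} (hx : x ≠ e) (hxy : x ≠ y) :
    ({e, x} : Finset α) \ {e, y} = {x} := by
  ext z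
  simp only [mem_sdiff, mem_insert, mem_singleton]
  constructor
  · rintro ⟨h1, h2⟩
    rcases h1 with rfl | rfl
    · exact absurd (Or.inl rfl) h2
    · rfl
  · rintro rfl
    exact ⟨Or.inr rfl, fun h => h.elim hx hxy⟩

lemma occ_adj {n : ℕ} {π : Equiv.Perm (Fin n)}
    {u v : {s : Finset (Fin n) // IsOccurrence (Equiv.refl (Fin 2)) π s}} {e x y : Fin n}
    (hu : u.val = {e, x}) (hv : v.val = {e, y}) (hx : x ≠ e) (hy : y ≠ e) (hxy : x ≠ y) :
    (OccGraph (Equiv.refl (Fin 2)) π).Adj u v := by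
  refine ⟨?_, ?_⟩
  · rw [hu, hv, pair_sdiff hx hxy]; simp
  · rw [hu, hv, pair_sdiff hy (Ne.symm hxy)]; simp

lemma pair_ne {α : Type*} [DecidableEq α] {a b c d : α} (h1 : a ≠ c) (h2 : a ≠ d) :
    ({a, b} : Finset α) ≠ {c, d} := by
  intro h
  have : a ∈ ({c, d} : Finset α) := h ▸ mem_insert_self a {b}
  simp only [mem_insert, mem_singleton] at this
  exact this.elim h1 h2

lemma contains123_iff {n : ℕ} (π : Equiv.Perm (Fin n)) :
    PermContains π (Equiv.refl (Fin 3)) ↔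
      ∃ a b c : Fin n, a < b ∧ b < c ∧ π a < π b ∧ π b < π c := by
  constructor
  · rintro ⟨j, hj, hc⟩
    exact ⟨j 0, j 1, j 2, hj (by decide), hj (by decide),
      (hc 0 1).mpr (by decide), (hc 1 2).mpr (by decide)⟩
  · rintro ⟨a, b, c, h1, h2, h3, h4⟩
    refine ⟨![a, b, c], ?_, ?_⟩
    · intro x y hxy
      fin_cases x <;> fin_cases y <;>
        first
          | exact absurd hxy (by decide)
          | simpa using h1
          | simpa using h2
          | simpa using h1.trans h2
    · intro x y
      fin_cases x <;> fin_cases y <;>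
        simp [lt_irrefl, h3, h4, h3.trans h4, (h3.trans h4).asymm, h3.asymm, h4.asymm,
          Fin.lt_def]

lemma contains1432_iff {n : ℕ} (π : Equiv.Perm (Fin n)) :
    PermContains π perm1432 ↔
      ∃ a b c d : Fin n, a < b ∧ b < c ∧ c < d ∧ π a < π d ∧ π d < π c ∧ π c < π b := by
  constructor
  · rintro ⟨j, hj, hc⟩
    exact ⟨j 0, j 1, j 2, j 3, hj (by decide), hj (by decide), hj (by decide),
      (hc 0 3).mpr (by decide), (hc 3 2).mpr (by decide), (hc 2 1).mpr (by decide)⟩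
  · rintro ⟨a, b, c, d, h1, h2, h3, h4, h5, h6⟩
    refine ⟨![a, b, c, d], ?_, ?_⟩
    · intro x y hxy
      fin_cases x <;> fin_cases y <;>
        first
          | exact absurd hxy (by decide)
          | simpa using h1
          | simpa using h2
          | simpa using h3
          | simpa using h1.trans h2
          | simpa using h2.trans h3
          | simpa using (h1.trans h2).trans h3
    · intro x y
      fin_cases x <;> fin_cases y <;>
        simp [perm1432, lt_irrefl, Fin.lt_def, h4, h5, h6, h4.asymm, h5.asymm, h6.asymm,
          h4.trans h5, (h4.trans h5).asymm, h5.trans h6, (h5.trans h6).asymm,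
          (h4.trans h5).trans h6, ((h4.trans h5).trans h6).asymm] <;> decide

lemma contains2143_iff {n : ℕ} (π : Equiv.Perm (Fin n)) :
    PermContains π perm2143 ↔
      ∃ a b c d : Fin n, a < b ∧ b < c ∧ c < d ∧ π b < π a ∧ π a < π d ∧ π d < π c := by
  constructor
  · rintro ⟨j, hj, hc⟩
    exact ⟨j 0, j 1, j 2, j 3, hj (by decide), hj (by decide), hj (by decide),
      (hc 1 0).mpr (by decide), (hc 0 3).mpr (by decide), (hc 3 2).mpr (by decide)⟩
  · rintro ⟨a, b, c, d, h1, h2, h3, h4, h5, h6⟩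
    refine ⟨![a, b, c, d], ?_, ?_⟩
    · intro x y hxy
      fin_cases x <;> fin_cases y <;>
        first
          | exact absurd hxy (by decide)
          | simpa using h1
          | simpa using h2
          | simpa using h3
          | simpa using h1.trans h2
          | simpa using h2.trans h3
          | simpa using (h1.trans h2).trans h3
    · intro x y
      fin_cases x <;> fin_cases y <;>
        simp [perm2143, lt_irrefl, Fin.lt_def, h4, h5, h6, h4.asymm, h5.asymm, h6.asymm,
          h4.trans h5, (h4.trans h5).asymm, h5.trans h6, (h5.trans h6).asymm,
          (h4.trans h5).trans h6, ((h4.trans h5).trans h6).asymm] <;> decide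

lemma contains3214_iff {n : ℕ} (π : Equiv.Perm (Fin n)) :
    PermContains π perm3214 ↔
      ∃ a b c d : Fin n, a < b ∧ b < c ∧ c < d ∧ π c < π b ∧ π b < π a ∧ π a < π d := by
  constructor
  · rintro ⟨j, hj, hc⟩
    exact ⟨j 0, j 1, j 2, j 3, hj (by decide), hj (by decide), hj (by decide),
      (hc 2 1).mpr (by decide), (hc 1 0).mpr (by decide), (hc 0 3).mpr (by decide)⟩
  · rintro ⟨a, b, c, d, h1, h2, h3, h4, h5, h6⟩
    refine ⟨![a, b, c, d], ?_, ?_⟩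
    · intro x y hxy
      fin_cases x <;> fin_cases y <;>
        first
          | exact absurd hxy (by decide)
          | simpa using h1
          | simpa using h2
          | simpa using h3
          | simpa using h1.trans h2
          | simpa using h2.trans h3
          | simpa using (h1.trans h2).trans h3
    · intro x y
      fin_cases x <;> fin_cases y <;>
        simp [perm3214, lt_irrefl, Fin.lt_def, h4, h5, h6, h4.asymm, h5.asymm, h6.asymm,
          h4.trans h5, (h4.trans h5).asymm, h5.trans h6, (h5.trans h6).asymm,
          (h4.trans h5).trans h6, ((h4.trans h5).trans h6).asymm] <;> decide

lemma not_acyclic_of_3cycle {V : Type*} {G : SimpleGraph V} {A B C : V}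
    (hAB : G.Adj A B) (hBC : G.Adj B C) (hCA : G.Adj C A) : ¬ G.IsAcyclic := by
  intro h
  have hac : A ≠ C := fun h' => (h' ▸ hCA).ne' rfl
  apply h (Walk.cons hAB (Walk.cons hBC (Walk.cons hCA Walk.nil)))
  rw [Walk.isCycle_def]
  refine ⟨?_, by simp, ?_⟩
  · rw [Walk.isTrail_def]
    simp [Sym2.eq, Sym2.rel_iff', hAB.ne, hBC.ne, hCA.ne, hac, hAB.ne', hBC.ne', hCA.ne',
      hac.symm]
  · simp [hBC.ne, hac.symm, hCA.ne, hAB.ne']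

lemma not_acyclic_of_4cycle {V : Type*} {G : SimpleGraph V} {A B C D : V}
    (hAB : G.Adj A B) (hBC : G.Adj B C) (hCD : G.Adj C D) (hDA : G.Adj D A)
    (hAC : A ≠ C) (hBD : B ≠ D) : ¬ G.IsAcyclic := by
  intro h
  apply h (Walk.cons hAB (Walk.cons hBC (Walk.cons hCD (Walk.cons hDA Walk.nil))))
  rw [Walk.isCycle_def]
  refine ⟨?_, by simp, ?_⟩
  · rw [Walk.isTrail_def]
    simp [Sym2.eq, Sym2.rel_iff', hAB.ne, hBC.ne, hCD.ne, hDA.ne, hAC, hBD,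
      hAB.ne', hBC.ne', hCD.ne', hDA.ne', hAC.symm, hBD.symm]
  · simp [hBC.ne, hCD.ne, hDA.ne, hAC.symm, hBD, hBD.symm, hDA.ne', hAB.ne']

lemma two_nbrs_aux {V : Type*} {G : SimpleGraph V} {w : V} {c : G.Walk w w}
    (hc : c.IsCycle) :
    ∃ x y, x ≠ y ∧ G.Adj w x ∧ G.Adj w y ∧ x ∈ c.support ∧ y ∈ c.support := by
  cases c with
  | nil => exact absurd hc Walk.IsCycle.not_of_nil
  | @cons _ b _ h q =>
    cases hqr : q.reverse with
    | nil =>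
      exfalso
      have : q.length = 0 := by
        have := congrArg Walk.length hqr
        simpa using this
      have h3 := hc.three_le_length
      simp [this] at h3
    | @cons _ y _ h2 q2 =>
      refine ⟨b, y, ?_, h, h2, ?_, ?_⟩
      · intro hby
        subst hby
        have htrail := hc.isTrail
        rw [Walk.isTrail_def] at htrail
        simp only [Walk.edges_cons, List.nodup_cons] at htrail
        apply htrail.1
        have hmem : s(w, b) ∈ q.reverse.edges := by
          rw [hqr]; simp [Sym2.eq, Sym2.rel_iff']
        rw [Walk.edges_reverse, List.mem_reverse] at hmem
        exact hmem
      · simp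
      · have : y ∈ q.reverse.support := by rw [hqr]; simp
        rw [Walk.support_reverse, List.mem_reverse] at this
        simp [this]

lemma two_nbrs {V : Type*} [DecidableEq V] {G : SimpleGraph V} {u w : V} {c : G.Walk u u}
    (hc : c.IsCycle) (hw : w ∈ c.support) :
    ∃ x y, x ≠ y ∧ G.Adj w x ∧ G.Adj w y ∧ x ∈ c.support ∧ y ∈ c.support := by
  obtain ⟨x, y, hxy, hx, hy, hxs, hys⟩ := two_nbrs_aux (hc.rotate hw)
  have hmem : ∀ z, z ∈ (c.rotate w hw).support → z ∈ c.support := by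
    intro z hz
    rw [Walk.support_eq_cons] at hz
    rcases List.mem_cons.mp hz with rfl | hz
    · exact hw
    · have := (Walk.support_rotate c w hw).mem_iff.mp hz
      exact List.mem_of_mem_tail this
  exact ⟨x, y, hxy, hx, hy, hmem x hxs, hmem y hys⟩

lemma sort3' {α : Type*} [LinearOrder α] {P : α → Prop} {x y z : α}
    (hxy : x ≠ y) (hxz : x ≠ z) (hyz : y ≠ z) (px : P x) (py : P y) (pz : P z) :
    ∃ a b c : α, a < b ∧ b < c ∧ P a ∧ P b ∧ P c := by
  rcases hxy.lt_or_gt with h1 | h1 <;> rcases hxz.lt_or_gt with h2 | h2 <;>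
    rcases hyz.lt_or_gt with h3 | h3
  · exact ⟨x, y, z, h1, h3, px, py, pz⟩
  · exact ⟨x, z, y, h2, h3, px, pz, py⟩
  · exact absurd (h1.trans h3) h2.asymm
  · exact ⟨z, x, y, h2, h1, pz, px, py⟩
  · exact ⟨y, x, z, h1, h2, py, px, pz⟩
  · exact absurd (h2.trans h3) h1.asymm
  · exact ⟨y, z, x, h3, h2, py, pz, px⟩
  · exact ⟨z, y, x, h3, h1, pz, py, px⟩

section Structure

variable {n : ℕ} {π : Equiv.Perm (Fin n)}

lemma aux_right (H123 : ∀ a b c : Fin n, a < b → b < c → π a < π b → π b < π c → False)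
    (H1432 : ∀ a b c d : Fin n, a < b → b < c → c < d →
      π a < π d → π d < π c → π c < π b → False)
    {v x y z : Fin n} (h1 : v < x) (h2 : x < y) (h3 : y < z)
    (ox : IsOccurrence (Equiv.refl (Fin 2)) π {v, x})
    (oy : IsOccurrence (Equiv.refl (Fin 2)) π {v, y})
    (oz : IsOccurrence (Equiv.refl (Fin 2)) π {v, z}) : False := by
  have pvx := occ_pair_lt ox h1
  have pvy := occ_pair_lt oy (h1.trans h2)
  have pvz := occ_pair_lt oz ((h1.trans h2).trans h3)
  have hxy : π x ≠ π y := fun h => h2.ne (π.injective h)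
  rcases hxy.lt_or_gt with h | h
  · exact H123 v x y h1 h2 pvx h
  · have hyz : π y ≠ π z := fun h' => h3.ne (π.injective h')
    rcases hyz.lt_or_gt with h' | h'
    · exact H123 v y z (h1.trans h2) h3 pvy h'
    · exact H1432 v x y z h1 h2 h3 pvz h' h

lemma aux_left (H123 : ∀ a b c : Fin n, a < b → b < c → π a < π b → π b < π c → False)
    (H3214 : ∀ a b c d : Fin n, a < b → b < c → c < d →
      π c < π b → π b < π a → π a < π d → False)
    {v x y z : Fin n} (h1 : x < y) (h2 : y < z) (h3 : z < v)
    (ox : IsOccurrence (Equiv.refl (Fin 2)) π {v, x})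
    (oy : IsOccurrence (Equiv.refl (Fin 2)) π {v, y})
    (oz : IsOccurrence (Equiv.refl (Fin 2)) π {v, z}) : False := by
  rw [Finset.pair_comm] at ox oy oz
  have pxv := occ_pair_lt ox ((h1.trans h2).trans h3)
  have pyv := occ_pair_lt oy (h2.trans h3)
  have pzv := occ_pair_lt oz h3
  have hxy : π x ≠ π y := fun h => h1.ne (π.injective h)
  rcases hxy.lt_or_gt with h | h
  · exact H123 x y v h1 (h2.trans h3) h pyv
  · have hyz : π y ≠ π z := fun h' => h2.ne (π.injective h')
    rcases hyz.lt_or_gt with h' | h'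
    · exact H123 y z v h2 h3 h' pzv
    · exact H3214 x y z v h1 h2 h3 h' h pxv

lemma no_three (H123 : ∀ a b c : Fin n, a < b → b < c → π a < π b → π b < π c → False)
    (H1432 : ∀ a b c d : Fin n, a < b → b < c → c < d →
      π a < π d → π d < π c → π c < π b → False)
    (H3214 : ∀ a b c d : Fin n, a < b → b < c → c < d →
      π c < π b → π b < π a → π a < π d → False)
    {v x y z : Fin n} (hx : x ≠ v) (hy : y ≠ v) (hz : z ≠ v)
    (hxy : x ≠ y) (hxz : x ≠ z) (hyz : y ≠ z)
    (ox : IsOccurrence (Equiv.refl (Fin 2)) π {v, x})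
    (oy : IsOccurrence (Equiv.refl (Fin 2)) π {v, y})
    (oz : IsOccurrence (Equiv.refl (Fin 2)) π {v, z}) : False := by
  have mixed : ∀ p q : Fin n, p < v → v < q →
      IsOccurrence (Equiv.refl (Fin 2)) π {v, p} →
      IsOccurrence (Equiv.refl (Fin 2)) π {v, q} → False := by
    intro p q hp hq op oq
    rw [Finset.pair_comm] at op
    exact H123 p v q hp hq (occ_pair_lt op hp) (occ_pair_lt oq hq)
  rcases hx.lt_or_gt with hx' | hx' <;> rcases hy.lt_or_gt with hy' | hy' <;>
    rcases hz.lt_or_gt with hz' | hz'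
  · -- all left
    obtain ⟨a, b, c, h1, h2, pa, pb, pc⟩ := sort3'
      (P := fun p => p < v ∧ IsOccurrence (Equiv.refl (Fin 2)) π {v, p})
      hxy hxz hyz ⟨hx', ox⟩ ⟨hy', oy⟩ ⟨hz', oz⟩
    exact aux_left H123 H3214 h1 h2 pc.1 pa.2 pb.2 pc.2
  · exact mixed x z hx' hz' ox oz
  · exact mixed x y hx' hy' ox oy
  · exact mixed x y hx' hy' ox oy
  · exact mixed y x hy' hx' oy ox
  · exact mixed y x hy' hx' oy ox
  · exact mixed z x hz' hx' oz ox
  · -- all right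
    obtain ⟨a, b, c, h1, h2, pa, pb, pc⟩ := sort3'
      (P := fun p => v < p ∧ IsOccurrence (Equiv.refl (Fin 2)) π {v, p})
      hxy hxz hyz ⟨hx', ox⟩ ⟨hy', oy⟩ ⟨hz', oz⟩
    exact aux_right H123 H1432 pa.1 h1 h2 pa.2 pb.2 pc.2

lemma adj_share {u m : {s : Finset (Fin n) // IsOccurrence (Equiv.refl (Fin 2)) π s}}
    (h : (OccGraph (Equiv.refl (Fin 2)) π).Adj u m) {p q : Fin n} (hu : u.val = {p, q}) :
    (p ∈ m.val ∧ q ∉ m.val) ∨ (q ∈ m.val ∧ p ∉ m.val) := by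
  have hne : u ≠ m := h.ne
  obtain ⟨h1, h2⟩ := h
  obtain ⟨hmc, -⟩ := m.2
  obtain ⟨huc, -⟩ := u.2
  by_cases hp : p ∈ m.val <;> by_cases hq : q ∈ m.val
  · exfalso
    apply hne
    apply Subtype.ext
    apply Finset.eq_of_subset_of_card_le
    · rw [hu]
      exact Finset.insert_subset hp (Finset.singleton_subset_iff.mpr hq)
    · rw [hmc, huc]
  · exact Or.inl ⟨hp, hq⟩
  · exact Or.inr ⟨hq, hp⟩
  · exfalso
    have hd : Disjoint u.val m.val := by
      rw [hu, Finset.disjoint_left]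
      intro z hz
      simp only [mem_insert, mem_singleton] at hz
      rcases hz with rfl | rfl <;> assumption
    rw [Finset.sdiff_eq_self_of_disjoint hd, huc] at h1
    exact absurd h1 (by norm_num)

end Structure

end Aux

theorem forest_iff_avoids (n : ℕ) (π : Equiv.Perm (Fin n)) :
    (OccGraph (Equiv.refl (Fin 2)) π).IsAcyclic ↔
      (¬ PermContains π (Equiv.refl (Fin 3)) ∧
       ¬ PermContains π perm1432 ∧
       ¬ PermContains π perm2143 ∧
       ¬ PermContains π perm3214) := by
  constructor
  · -- acyclic → avoids
    intro hac
    refine ⟨?_, ?_, ?_, ?_⟩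
    · intro hcon
      obtain ⟨a, b, c, h1, h2, h3, h4⟩ := (contains123_iff π).mp hcon
      refine not_acyclic_of_3cycle
        (A := ⟨({a, b} : Finset (Fin n)), (occ_two_iff π _).mpr ⟨a, b, h1, h3, rfl⟩⟩)
        (B := ⟨({b, c} : Finset (Fin n)), (occ_two_iff π _).mpr ⟨b, c, h2, h4, rfl⟩⟩)
        (C := ⟨({a, c} : Finset (Fin n)), (occ_two_iff π _).mpr
          ⟨a, c, h1.trans h2, h3.trans h4, rfl⟩⟩)
        ?_ ?_ ?_ hac
      · exact occ_adj (Finset.pair_comm a b) rfl h1.ne h2.ne' (h1.trans h2).ne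
      · exact occ_adj (Finset.pair_comm b c) (Finset.pair_comm a c)
          h2.ne (h1.trans h2).ne h1.ne'
      · exact occ_adj rfl rfl (h1.trans h2).ne' h1.ne' h2.ne'
    · intro hcon
      obtain ⟨a, b, c, d, h1, h2, h3, h4, h5, h6⟩ := (contains1432_iff π).mp hcon
      refine not_acyclic_of_3cycle
        (A := ⟨({a, b} : Finset (Fin n)), (occ_two_iff π _).mpr
          ⟨a, b, h1, h4.trans (h5.trans h6), rfl⟩⟩)
        (B := ⟨({a, c} : Finset (Fin n)), (occ_two_iff π _).mpr
          ⟨a, c, h1.trans h2, h4.trans h5, rfl⟩⟩)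
        (C := ⟨({a, d} : Finset (Fin n)), (occ_two_iff π _).mpr
          ⟨a, d, (h1.trans h2).trans h3, h4, rfl⟩⟩)
        ?_ ?_ ?_ hac
      · exact occ_adj rfl rfl h1.ne' (h1.trans h2).ne' h2.ne
      · exact occ_adj rfl rfl (h1.trans h2).ne' ((h1.trans h2).trans h3).ne' h3.ne
      · exact occ_adj rfl rfl ((h1.trans h2).trans h3).ne' h1.ne' (h2.trans h3).ne'
    · intro hcon
      obtain ⟨a, b, c, d, h1, h2, h3, h4, h5, h6⟩ := (contains2143_iff π).mp hcon
      refine not_acyclic_of_4cycle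
        (A := ⟨({a, c} : Finset (Fin n)), (occ_two_iff π _).mpr
          ⟨a, c, h1.trans h2, h5.trans h6, rfl⟩⟩)
        (B := ⟨({a, d} : Finset (Fin n)), (occ_two_iff π _).mpr
          ⟨a, d, (h1.trans h2).trans h3, h5, rfl⟩⟩)
        (C := ⟨({b, d} : Finset (Fin n)), (occ_two_iff π _).mpr
          ⟨b, d, h2.trans h3, h4.trans h5, rfl⟩⟩)
        (D := ⟨({b, c} : Finset (Fin n)), (occ_two_iff π _).mpr
          ⟨b, c, h2, (h4.trans h5).trans h6, rfl⟩⟩)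
        ?_ ?_ ?_ ?_ ?_ ?_ hac
      · exact occ_adj rfl rfl (h1.trans h2).ne' ((h1.trans h2).trans h3).ne' h3.ne
      · exact occ_adj (Finset.pair_comm a d) (Finset.pair_comm b d)
          ((h1.trans h2).trans h3).ne (h2.trans h3).ne h1.ne
      · exact occ_adj rfl rfl (h2.trans h3).ne' h2.ne' h3.ne'
      · exact occ_adj (Finset.pair_comm b c) (Finset.pair_comm a c)
          h2.ne (h1.trans h2).ne h1.ne'
      · exact fun h => pair_ne h1.ne (h1.trans (h2.trans h3)).ne
          (congrArg Subtype.val h)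
      · exact fun h => pair_ne h1.ne (h1.trans h2).ne (congrArg Subtype.val h)
    · intro hcon
      obtain ⟨a, b, c, d, h1, h2, h3, h4, h5, h6⟩ := (contains3214_iff π).mp hcon
      refine not_acyclic_of_3cycle
        (A := ⟨({a, d} : Finset (Fin n)), (occ_two_iff π _).mpr
          ⟨a, d, (h1.trans h2).trans h3, h6, rfl⟩⟩)
        (B := ⟨({b, d} : Finset (Fin n)), (occ_two_iff π _).mpr
          ⟨b, d, h2.trans h3, h5.trans h6, rfl⟩⟩)
        (C := ⟨({c, d} : Finset (Fin n)), (occ_two_iff π _).mpr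
          ⟨c, d, h3, h4.trans (h5.trans h6), rfl⟩⟩)
        ?_ ?_ ?_ hac
      · exact occ_adj (Finset.pair_comm a d) (Finset.pair_comm b d)
          ((h1.trans h2).trans h3).ne (h2.trans h3).ne h1.ne
      · exact occ_adj (Finset.pair_comm b d) (Finset.pair_comm c d)
          (h2.trans h3).ne h3.ne h2.ne
      · exact occ_adj (Finset.pair_comm c d) (Finset.pair_comm a d)
          h3.ne ((h1.trans h2).trans h3).ne (h1.trans h2).ne'
  · -- avoids → acyclic
    rintro ⟨hA, hB, hC, hD⟩
    have H123 : ∀ a b c : Fin n, a < b → b < c → π a < π b → π b < π c → False :=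
      fun a b c h1 h2 h3 h4 => hA ((contains123_iff π).mpr ⟨a, b, c, h1, h2, h3, h4⟩)
    have H1432 : ∀ a b c d : Fin n, a < b → b < c → c < d →
        π a < π d → π d < π c → π c < π b → False :=
      fun a b c d h1 h2 h3 h4 h5 h6 =>
        hB ((contains1432_iff π).mpr ⟨a, b, c, d, h1, h2, h3, h4, h5, h6⟩)
    have H2143 : ∀ a b c d : Fin n, a < b → b < c → c < d →
        π b < π a → π a < π d → π d < π c → False :=
      fun a b c d h1 h2 h3 h4 h5 h6 =>
        hC ((contains2143_iff π).mpr ⟨a, b, c, d, h1, h2, h3, h4, h5, h6⟩)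
    have H3214 : ∀ a b c d : Fin n, a < b → b < c → c < d →
        π c < π b → π b < π a → π a < π d → False :=
      fun a b c d h1 h2 h3 h4 h5 h6 =>
        hD ((contains3214_iff π).mpr ⟨a, b, c, d, h1, h2, h3, h4, h5, h6⟩)
    intro u c hc
    classical
    set S : Finset (Fin n) := c.support.toFinset.biUnion (fun w => w.val) with hS
    have hmemS : ∀ x : Fin n, x ∈ S ↔ ∃ w, w ∈ c.support ∧ x ∈ w.val := by
      intro x
      simp [hS, Finset.mem_biUnion, List.mem_toFinset]
    have hSne : S.Nonempty := by
      obtain ⟨a, b, hab, hπ, hval⟩ := (occ_two_iff π _).mp u.2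
      exact ⟨a, (hmemS a).mpr ⟨u, SimpleGraph.Walk.start_mem_support c,
        by rw [hval]; simp⟩⟩
    set v := S.min' hSne with hv
    have hvS := S.min'_mem hSne
    have hmin : ∀ w : {s : Finset (Fin n) // IsOccurrence (Equiv.refl (Fin 2)) π s},
        w ∈ c.support → ∀ x ∈ w.val, v ≤ x :=
      fun w hw x hx => S.min'_le x ((hmemS x).mpr ⟨w, hw, hx⟩)
    have keyC : ∀ w : {s : Finset (Fin n) // IsOccurrence (Equiv.refl (Fin 2)) π s},
        w ∈ c.support → ∀ p q : Fin n, p ≠ q → w.val = {p, q} →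
        ∃ w', w' ∈ c.support ∧ p ∈ w'.val ∧ q ∉ w'.val := by
      intro w hw p q hpq hwval
      obtain ⟨x1, x2, h12, ha1, ha2, hs1, hs2⟩ := two_nbrs hc hw
      rcases adj_share ha1 hwval with ⟨hp1, hq1⟩ | ⟨hq1, hp1⟩
      · exact ⟨x1, hs1, hp1, hq1⟩
      rcases adj_share ha2 hwval with ⟨hp2, hq2⟩ | ⟨hq2, hp2⟩
      · exact ⟨x2, hs2, hp2, hq2⟩
      exfalso
      obtain ⟨r1, hr1q, hx1val⟩ := occ_mem_pair x1.2 hq1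
      obtain ⟨r2, hr2q, hx2val⟩ := occ_mem_pair x2.2 hq2
      have hr1p : r1 ≠ p := fun h => hp1 (by rw [hx1val]; simp [h])
      have hr2p : r2 ≠ p := fun h => hp2 (by rw [hx2val]; simp [h])
      have hr12 : r1 ≠ r2 := by
        intro h
        apply h12
        apply Subtype.ext
        rw [hx1val, hx2val, h]
      exact no_three H123 H1432 H3214 (v := q) (x := p) (y := r1) (z := r2)
        hpq hr1q hr2q (Ne.symm hr1p) (Ne.symm hr2p) hr12
        (by rw [← Finset.pair_comm p q, ← hwval]; exact w.2)
        (hx1val ▸ x1.2) (hx2val ▸ x2.2)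
    obtain ⟨w0, hw0, hvw0⟩ := (hmemS v).mp hvS
    obtain ⟨t, htv, hw0val⟩ := occ_mem_pair w0.2 hvw0
    have hvt : v < t :=
      lt_of_le_of_ne (hmin w0 hw0 t (by rw [hw0val]; simp)) (Ne.symm htv)
    have final : ∀ (Q1 Q2 : {s : Finset (Fin n) // IsOccurrence (Equiv.refl (Fin 2)) π s}),
        Q1 ∈ c.support → Q2 ∈ c.support → ∀ t1 t2 : Fin n,
        Q1.val = {v, t1} → Q2.val = {v, t2} → v < t1 → t1 < t2 → False := by
      intro Q1 Q2 hQ1 hQ2 t1 t2 hQ1v hQ2v hvt1 ht12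
      obtain ⟨w2, hw2s, ht1w2, hvw2⟩ := keyC Q1 hQ1 t1 v hvt1.ne'
        (by rw [hQ1v, Finset.pair_comm])
      obtain ⟨x, hxt1, hw2val⟩ := occ_mem_pair w2.2 ht1w2
      have hxv : x ≠ v := fun h => hvw2 (by rw [hw2val]; simp [h])
      have hvx : v < x :=
        lt_of_le_of_ne (hmin w2 hw2s x (by rw [hw2val]; simp)) (Ne.symm hxv)
      have hπvt1 : π v < π t1 := occ_pair_lt (hQ1v ▸ Q1.2) hvt1
      have hπvt2 : π v < π t2 := occ_pair_lt (hQ2v ▸ Q2.2) (hvt1.trans ht12)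
      have hOcc2 : IsOccurrence (Equiv.refl (Fin 2)) π {t1, x} := hw2val ▸ w2.2
      have hxt1' : x < t1 := by
        rcases hxt1.lt_or_gt with h | h
        · exact h
        · exact (H123 v t1 x hvt1 h hπvt1 (occ_pair_lt hOcc2 h)).elim
      have hπxt1 : π x < π t1 :=
        occ_pair_lt (by rwa [Finset.pair_comm] at hOcc2) hxt1'
      have hπxv : π x < π v := by
        have hne : π x ≠ π v := fun h => hxv (π.injective h)
        rcases hne.lt_or_gt with h | h
        · exact h
        · exact (H123 v x t1 hvx hxt1' h hπxt1).elim
      have hπt21 : π t2 < π t1 := by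
        have hne : π t1 ≠ π t2 := fun h => ht12.ne (π.injective h)
        rcases hne.lt_or_gt with h | h
        · exact (H123 v t1 t2 hvt1 ht12 hπvt1 h).elim
        · exact h
      exact H2143 v x t1 t2 hvx hxt1' ht12 hπxv hπvt2 hπt21
    obtain ⟨w1, hw1s, hvw1, htw1⟩ := keyC w0 hw0 v t hvt.ne hw0val
    obtain ⟨t', ht'v, hw1val⟩ := occ_mem_pair w1.2 hvw1
    have htt' : t' ≠ t := fun h => htw1 (by rw [hw1val]; simp [h])
    have hvt' : v < t' :=
      lt_of_le_of_ne (hmin w1 hw1s t' (by rw [hw1val]; simp)) (Ne.symm ht'v)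
    rcases htt'.lt_or_gt with h | h
    · exact final w1 w0 hw1s hw0 t' t hw1val hw0val hvt' h
    · exact final w0 w1 hw0 hw1s t t' hw0val hw1val hvt h
end

section
/- If a permutation π contains any of the patterns 123, 1432 or 3214, then the occurrence graph G_{12}(π) of the pattern 12 in π contains a triangle (three pairwise adjacent vertices). -/
open Finset

lemma pair_occ {n : ℕ} (π : Equiv.Perm (Fin n)) (i j : Fin n) (hij : i < j)
    (hπ : π i < π j) : IsOccurrence (Equiv.refl (Fin 2)) π {i, j} := by
  have hcard : ({i, j} : Finset (Fin n)).card = 2 := Finset.card_pair hij.ne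
  refine ⟨hcard, ?_⟩
  set f := ({i,j} : Finset (Fin n)).orderIsoOfFin hcard with hf
  have hm0 : (f 0 : Fin n) ∈ ({i,j} : Finset (Fin n)) := (f 0).2
  have hm1 : (f 1 : Fin n) ∈ ({i,j} : Finset (Fin n)) := (f 1).2
  have hlt : (f 0 : Fin n) < (f 1 : Fin n) := f.strictMono (by decide)
  simp only [Finset.mem_insert, Finset.mem_singleton] at hm0 hm1
  have h0 : (f 0 : Fin n) = i := by
    rcases hm0 with h | h
    · exact h
    · rcases hm1 with h' | h' <;> rw [h, h'] at hlt <;> omega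
  have h1 : (f 1 : Fin n) = j := by
    rcases hm1 with h' | h'
    · rw [h0, h'] at hlt; omega
    · exact h'
  intro a b
  fin_cases a <;> fin_cases b <;>
    simp [h0, h1, hπ, le_of_lt hπ, (lt_irrefl _ : ¬ π i < π i)]

lemma pair_sdiff_s12 {n : ℕ} (x a b : Fin n) (hax : a ≠ x) (hab : a ≠ b) :
    (({x, a} : Finset (Fin n)) \ ({x, b} : Finset (Fin n))).card = 1 := by
  have : ({x, a} : Finset (Fin n)) \ ({x, b}) = {a} := by
    ext z
    simp only [Finset.mem_sdiff, Finset.mem_insert, Finset.mem_singleton]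
    constructor
    · rintro ⟨h1 | h1, h2⟩ <;> tauto
    · rintro rfl; tauto
  rw [this, Finset.card_singleton]

theorem contains_gives_triangle (n : ℕ) (π : Equiv.Perm (Fin n))
    (h : PermContains π (Equiv.refl (Fin 3)) ∨
         PermContains π perm1432 ∨ PermContains π perm3214) :
    ∃ u v w : {s : Finset (Fin n) // IsOccurrence (Equiv.refl (Fin 2)) π s},
      (OccGraph (Equiv.refl (Fin 2)) π).Adj u v ∧
      (OccGraph (Equiv.refl (Fin 2)) π).Adj v w ∧
      (OccGraph (Equiv.refl (Fin 2)) π).Adj u w := by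
  obtain ⟨j, hj, hs⟩ | ⟨j, hj, hs⟩ | ⟨j, hj, hs⟩ := h
  · -- 123 : triangle {j0,j1},{j0,j2},{j1,j2}
    have hne : ∀ a b : Fin 3, a ≠ b → j a ≠ j b := fun a b hab e => hab (hj.injective e)
    have h01 : π (j 0) < π (j 1) := (hs 0 1).2 (by decide)
    have h02 : π (j 0) < π (j 2) := (hs 0 2).2 (by decide)
    have h12 : π (j 1) < π (j 2) := (hs 1 2).2 (by decide)
    refine ⟨⟨{j 0, j 1}, pair_occ π _ _ (hj (by decide)) h01⟩,
            ⟨{j 0, j 2}, pair_occ π _ _ (hj (by decide)) h02⟩,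
            ⟨{j 1, j 2}, pair_occ π _ _ (hj (by decide)) h12⟩, ?_, ?_, ?_⟩
    · exact ⟨pair_sdiff_s12 _ _ _ (hne 1 0 (by decide)) (hne 1 2 (by decide)),
             pair_sdiff_s12 _ _ _ (hne 2 0 (by decide)) (hne 2 1 (by decide))⟩
    · constructor
      · show (({j 0, j 2} : Finset (Fin n)) \ {j 1, j 2}).card = 1
        rw [Finset.pair_comm (j 0) (j 2), Finset.pair_comm (j 1) (j 2)]
        exact pair_sdiff_s12 _ _ _ (hne 0 2 (by decide)) (hne 0 1 (by decide))
      · show (({j 1, j 2} : Finset (Fin n)) \ {j 0, j 2}).card = 1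
        rw [Finset.pair_comm (j 0) (j 2), Finset.pair_comm (j 1) (j 2)]
        exact pair_sdiff_s12 _ _ _ (hne 1 2 (by decide)) (hne 1 0 (by decide))
    · constructor
      · show (({j 0, j 1} : Finset (Fin n)) \ {j 1, j 2}).card = 1
        rw [Finset.pair_comm (j 0) (j 1)]
        exact pair_sdiff_s12 _ _ _ (hne 0 1 (by decide)) (hne 0 2 (by decide))
      · show (({j 1, j 2} : Finset (Fin n)) \ {j 0, j 1}).card = 1
        rw [Finset.pair_comm (j 0) (j 1)]
        exact pair_sdiff_s12 _ _ _ (hne 2 1 (by decide)) (hne 2 0 (by decide))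
  · -- 1432 : triangle {j0,j1},{j0,j2},{j0,j3}
    have hne : ∀ a b : Fin 4, a ≠ b → j a ≠ j b := fun a b hab e => hab (hj.injective e)
    have h01 : π (j 0) < π (j 1) := (hs 0 1).2 (by decide)
    have h02 : π (j 0) < π (j 2) := (hs 0 2).2 (by decide)
    have h03 : π (j 0) < π (j 3) := (hs 0 3).2 (by decide)
    refine ⟨⟨{j 0, j 1}, pair_occ π _ _ (hj (by decide)) h01⟩,
            ⟨{j 0, j 2}, pair_occ π _ _ (hj (by decide)) h02⟩,
            ⟨{j 0, j 3}, pair_occ π _ _ (hj (by decide)) h03⟩, ?_, ?_, ?_⟩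
    · exact ⟨pair_sdiff_s12 _ _ _ (hne 1 0 (by decide)) (hne 1 2 (by decide)),
             pair_sdiff_s12 _ _ _ (hne 2 0 (by decide)) (hne 2 1 (by decide))⟩
    · exact ⟨pair_sdiff_s12 _ _ _ (hne 2 0 (by decide)) (hne 2 3 (by decide)),
             pair_sdiff_s12 _ _ _ (hne 3 0 (by decide)) (hne 3 2 (by decide))⟩
    · exact ⟨pair_sdiff_s12 _ _ _ (hne 1 0 (by decide)) (hne 1 3 (by decide)),
             pair_sdiff_s12 _ _ _ (hne 3 0 (by decide)) (hne 3 1 (by decide))⟩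
  · -- 3214 : triangle {j0,j3},{j1,j3},{j2,j3}
    have hne : ∀ a b : Fin 4, a ≠ b → j a ≠ j b := fun a b hab e => hab (hj.injective e)
    have h03 : π (j 0) < π (j 3) := (hs 0 3).2 (by decide)
    have h13 : π (j 1) < π (j 3) := (hs 1 3).2 (by decide)
    have h23 : π (j 2) < π (j 3) := (hs 2 3).2 (by decide)
    refine ⟨⟨{j 0, j 3}, pair_occ π _ _ (hj (by decide)) h03⟩,
            ⟨{j 1, j 3}, pair_occ π _ _ (hj (by decide)) h13⟩,
            ⟨{j 2, j 3}, pair_occ π _ _ (hj (by decide)) h23⟩, ?_, ?_, ?_⟩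
    · constructor
      · show (({j 0, j 3} : Finset (Fin n)) \ {j 1, j 3}).card = 1
        rw [Finset.pair_comm (j 0) (j 3), Finset.pair_comm (j 1) (j 3)]
        exact pair_sdiff_s12 _ _ _ (hne 0 3 (by decide)) (hne 0 1 (by decide))
      · show (({j 1, j 3} : Finset (Fin n)) \ {j 0, j 3}).card = 1
        rw [Finset.pair_comm (j 0) (j 3), Finset.pair_comm (j 1) (j 3)]
        exact pair_sdiff_s12 _ _ _ (hne 1 3 (by decide)) (hne 1 0 (by decide))
    · constructor
      · show (({j 1, j 3} : Finset (Fin n)) \ {j 2, j 3}).card = 1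
        rw [Finset.pair_comm (j 1) (j 3), Finset.pair_comm (j 2) (j 3)]
        exact pair_sdiff_s12 _ _ _ (hne 1 3 (by decide)) (hne 1 2 (by decide))
      · show (({j 2, j 3} : Finset (Fin n)) \ {j 1, j 3}).card = 1
        rw [Finset.pair_comm (j 1) (j 3), Finset.pair_comm (j 2) (j 3)]
        exact pair_sdiff_s12 _ _ _ (hne 2 3 (by decide)) (hne 2 1 (by decide))
    · constructor
      · show (({j 0, j 3} : Finset (Fin n)) \ {j 2, j 3}).card = 1
        rw [Finset.pair_comm (j 0) (j 3), Finset.pair_comm (j 2) (j 3)]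
        exact pair_sdiff_s12 _ _ _ (hne 0 3 (by decide)) (hne 0 2 (by decide))
      · show (({j 2, j 3} : Finset (Fin n)) \ {j 0, j 3}).card = 1
        rw [Finset.pair_comm (j 0) (j 3), Finset.pair_comm (j 2) (j 3)]
        exact pair_sdiff_s12 _ _ _ (hne 2 3 (by decide)) (hne 2 0 (by decide))
end

section
/- If a permutation π contains the pattern 2143, then the occurrence graph G_{12}(π) of the pattern 12 in π contains a simple cycle of length four. -/
open Finset

/-- The graph `G` has a simple cycle of length `k`. -/
def HasCycleLength {V : Type} (G : SimpleGraph V) (k : ℕ) : Prop :=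
  ∃ (u : V) (w : G.Walk u u), w.IsCycle ∧ w.length = k

section
variable {n : ℕ}

lemma pairOcc (π : Equiv.Perm (Fin n)) {a b : Fin n} (hab : a < b)
    (hπ : π a < π b) : IsOccurrence (Equiv.refl (Fin 2)) π {a, b} := by
  have hne : a ≠ b := ne_of_lt hab
  have hcard : ({a, b} : Finset (Fin n)).card = 2 := by
    rw [Finset.card_insert_of_notMem (by simp [hne]), Finset.card_singleton]
  refine ⟨hcard, ?_⟩
  set f := ({a, b} : Finset (Fin n)).orderIsoOfFin hcard with hf
  have hmem : ∀ i : Fin 2, (f i : Fin n) ∈ ({a, b} : Finset (Fin n)) := fun i => (f i).2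
  have h01 : (f 0 : Fin n) < (f 1 : Fin n) := by
    have : (0 : Fin 2) < 1 := by decide
    exact (Finset.orderIsoOfFin _ hcard).strictMono this
  have hf0 : (f 0 : Fin n) = a := by
    rcases Finset.mem_insert.1 (hmem 0) with h0 | h0
    · exact h0
    · exfalso
      have h0' : (f 0 : Fin n) = b := Finset.mem_singleton.1 h0
      rcases Finset.mem_insert.1 (hmem 1) with h1 | h1
      · rw [h0', h1] at h01; exact absurd h01 (not_lt.2 hab.le)
      · have h1' : (f 1 : Fin n) = b := Finset.mem_singleton.1 h1
        rw [h0', h1'] at h01; exact lt_irrefl _ h01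
  have hf1 : (f 1 : Fin n) = b := by
    rcases Finset.mem_insert.1 (hmem 1) with h1 | h1
    · exfalso; rw [hf0, h1] at h01; exact lt_irrefl _ h01
    · exact Finset.mem_singleton.1 h1
  intro i j
  fin_cases i <;> fin_cases j <;> simp_all [hf0, hf1, hπ, lt_asymm hπ]

lemma pair_sdiff_s13 {a c d : Fin n} (hca : c ≠ a) (hcd : c ≠ d) :
    (({a, c} : Finset (Fin n)) \ {a, d}).card = 1 := by
  have : (({a, c} : Finset (Fin n)) \ {a, d}) = {c} := by
    ext x
    simp only [Finset.mem_sdiff, Finset.mem_insert, Finset.mem_singleton]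
    constructor
    · rintro ⟨hx1 | hx1, hx2⟩
      · exact absurd (Or.inl hx1) hx2
      · exact hx1
    · rintro rfl
      exact ⟨Or.inr rfl, by rintro (rfl | rfl) <;> [exact hca rfl; exact hcd rfl]⟩
  rw [this, Finset.card_singleton]

lemma pair_ne_s13 {a b c d : Fin n} (hbc : b ≠ c) (hbd : b ≠ d) :
    ({a, b} : Finset (Fin n)) ≠ {c, d} := by
  intro h
  have : b ∈ ({c, d} : Finset (Fin n)) := h ▸ (by simp)
  simp only [Finset.mem_insert, Finset.mem_singleton] at this
  rcases this with rfl | rfl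
  · exact hbc rfl
  · exact hbd rfl
end

theorem contains2143_gives_fourcycle (n : ℕ) (π : Equiv.Perm (Fin n))
    (h : PermContains π perm2143) :
    HasCycleLength (OccGraph (Equiv.refl (Fin 2)) π) 4 := by
  obtain ⟨j, hj, hord⟩ := h
  set j0 := j 0; set j1 := j 1; set j2 := j 2; set j3 := j 3
  have h01 : j0 < j1 := hj (by decide : (0:Fin 4) < 1)
  have h12 : j1 < j2 := hj (by decide : (1:Fin 4) < 2)
  have h23 : j2 < j3 := hj (by decide : (2:Fin 4) < 3)
  have h02 : j0 < j2 := h01.trans h12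
  have h03 : j0 < j3 := h02.trans h23
  have h13 : j1 < j3 := h12.trans h23
  have p02 : π j0 < π j2 := (hord 0 2).2 (by decide)
  have p03 : π j0 < π j3 := (hord 0 3).2 (by decide)
  have p12 : π j1 < π j2 := (hord 1 2).2 (by decide)
  have p13 : π j1 < π j3 := (hord 1 3).2 (by decide)
  -- vertices
  let A : {s : Finset (Fin n) // IsOccurrence (Equiv.refl (Fin 2)) π s} :=
    ⟨{j0, j2}, pairOcc π h02 p02⟩
  let B : {s : Finset (Fin n) // IsOccurrence (Equiv.refl (Fin 2)) π s} :=
    ⟨{j0, j3}, pairOcc π h03 p03⟩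
  let C : {s : Finset (Fin n) // IsOccurrence (Equiv.refl (Fin 2)) π s} :=
    ⟨{j1, j3}, pairOcc π h13 p13⟩
  let D : {s : Finset (Fin n) // IsOccurrence (Equiv.refl (Fin 2)) π s} :=
    ⟨{j1, j2}, pairOcc π h12 p12⟩
  have G := OccGraph (Equiv.refl (Fin 2)) π
  have hAB : (OccGraph (Equiv.refl (Fin 2)) π).Adj A B :=
    ⟨pair_sdiff_s13 h02.ne' h23.ne, pair_sdiff_s13 h03.ne' h23.ne'⟩
  have hBC : (OccGraph (Equiv.refl (Fin 2)) π).Adj B C := by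
    constructor
    · show (({j0, j3} : Finset (Fin n)) \ {j1, j3}).card = 1
      rw [Finset.pair_comm j0 j3, Finset.pair_comm j1 j3]
      exact pair_sdiff_s13 h03.ne h01.ne
    · show (({j1, j3} : Finset (Fin n)) \ {j0, j3}).card = 1
      rw [Finset.pair_comm j1 j3, Finset.pair_comm j0 j3]
      exact pair_sdiff_s13 h13.ne h01.ne'
  have hCD : (OccGraph (Equiv.refl (Fin 2)) π).Adj C D :=
    ⟨pair_sdiff_s13 h13.ne' h23.ne', pair_sdiff_s13 h12.ne' h23.ne⟩
  have hDA : (OccGraph (Equiv.refl (Fin 2)) π).Adj D A := by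
    constructor
    · show (({j1, j2} : Finset (Fin n)) \ {j0, j2}).card = 1
      rw [Finset.pair_comm j1 j2, Finset.pair_comm j0 j2]
      exact pair_sdiff_s13 h12.ne h01.ne'
    · show (({j0, j2} : Finset (Fin n)) \ {j1, j2}).card = 1
      rw [Finset.pair_comm j0 j2, Finset.pair_comm j1 j2]
      exact pair_sdiff_s13 h02.ne h01.ne
  have neAB : A ≠ B := fun h => pair_ne_s13 h02.ne' h23.ne (congrArg Subtype.val h)
  have neAC : A ≠ C := fun h => pair_ne_s13 h12.ne' h23.ne (congrArg Subtype.val h)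
  have neAD : A ≠ D := fun h => by
    have h' : ({j0, j2} : Finset (Fin n)) = {j1, j2} := congrArg Subtype.val h
    rw [Finset.pair_comm j0 j2] at h'
    exact pair_ne_s13 h01.ne h02.ne h'
  have neBC : B ≠ C := fun h => by
    have h' : ({j0, j3} : Finset (Fin n)) = {j1, j3} := congrArg Subtype.val h
    rw [Finset.pair_comm j0 j3] at h'
    exact pair_ne_s13 h01.ne h03.ne h' 
  have neBD : B ≠ D := fun h => pair_ne_s13 h13.ne' h23.ne' (congrArg Subtype.val h)
  have neCD : C ≠ D := fun h => pair_ne_s13 h13.ne' h23.ne' (congrArg Subtype.val h)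
  refine ⟨A, SimpleGraph.Walk.cons hAB (SimpleGraph.Walk.cons hBC
    (SimpleGraph.Walk.cons hCD (SimpleGraph.Walk.cons hDA SimpleGraph.Walk.nil))), ?_, rfl⟩
  rw [SimpleGraph.Walk.isCycle_def, SimpleGraph.Walk.isTrail_def]
  refine ⟨?_, by simp, ?_⟩
  · simp [neAB, neAC, neAD, neBC, neBD, neCD, neAB.symm, neAC.symm, neAD.symm,
      neBC.symm, neBD.symm, neCD.symm, Sym2.eq_iff]
  · simp [neAB, neAC, neAD, neBC, neBD, neCD, neAB.symm, neAC.symm, neAD.symm,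
      neBC.symm, neBD.symm, neCD.symm]
end
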